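/- arXiv:2110.01468 — 8 statements merged into one kernel-verified Lean document; each statement's English description precedes it below -/
import Mathlib

section
/- Let X be a nonempty Polish space and let (A_α)_{α<ω₁} be a family, indexed by the countable ordinals, of pairwise disjoint subsets of X each of which is non-meager in X. Then there exists α < ω₁ such that A_α does not have the property of Baire (i.e., A_α is not Baire measurable: there is no open set V such that the symmetric difference A_α △ V is meager). -/
open Cardinal

lemma IsMeagre.union' {X : Type*} [TopologicalSpace X] {s t : Set X}
    (hs : IsMeagre s) (ht : IsMeagre t) : IsMeagre (s ∪ t) := by
  rw [IsMeagre, Set.compl_union]; exact Filter.inter_mem hs ht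

/-- In a Baire space, an open meager set is empty. -/
lemma meagre_open_empty {X : Type*} [TopologicalSpace X] [BaireSpace X] {V : Set X}
    (hV : IsOpen V) (hm : IsMeagre V) : V = ∅ := by
  have hd : Dense Vᶜ := dense_of_mem_residual hm
  by_contra hne
  obtain ⟨x, hx⟩ := Set.nonempty_iff_ne_empty.2 hne
  obtain ⟨y, hy⟩ := hd.exists_mem_open hV ⟨x, hx⟩
  exact hy.1 hy.2

/-- Let `X` be a nonempty Polish space and let `⟨A_α : α < ω₁⟩` be a family of
pairwise disjoint subsets of `X`, each of which is non-meager in `X`. Then there exists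
`α < ω₁` such that `A_α` does not have the property of Baire, i.e. there is no open set `V`
with `A_α ∆ V` meager. -/
theorem statement1 (X : Type*) [TopologicalSpace X] [PolishSpace X] [Nonempty X]
    (A : Ordinal.{0} → Set X)
    (hdisj : ∀ α β, α < (Cardinal.aleph 1).ord → β < (Cardinal.aleph 1).ord → α ≠ β →
      Disjoint (A α) (A β))
    (hnonmeager : ∀ α, α < (Cardinal.aleph 1).ord → ¬ IsMeagre (A α)) :
    ∃ α, α < (Cardinal.aleph 1).ord ∧
      ¬ ∃ V : Set X, IsOpen V ∧ IsMeagre (symmDiff (A α) V) := by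
  letI := TopologicalSpace.upgradeIsCompletelyMetrizable X
  by_contra h
  push_neg at h
  -- choose open sets
  choose V hVopen hVmeagre using h
  set I := {α : Ordinal.{0} | α < (Cardinal.aleph 1).ord} with hI
  -- each V α is nonempty
  have hne : ∀ α (hα : α < (Cardinal.aleph 1).ord), (V α hα).Nonempty := by
    intro α hα
    rw [Set.nonempty_iff_ne_empty]
    intro hVe
    apply hnonmeager α hα
    have : A α ⊆ symmDiff (A α) (V α hα) ∪ V α hα := by
      intro x hx
      by_cases hxV : x ∈ V α hα
      · exact Or.inr hxV
      · exact Or.inl (Or.inl ⟨hx, hxV⟩)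
    refine ((hVmeagre α hα).union' ?_).mono this
    rw [hVe]; exact IsMeagre.empty
  -- pairwise disjoint
  have hVdisj : ∀ α β (hα : α < (Cardinal.aleph 1).ord) (hβ : β < (Cardinal.aleph 1).ord),
      α ≠ β → V α hα ∩ V β hβ = ∅ := by
    intro α β hα hβ hne'
    apply meagre_open_empty ((hVopen α hα).inter (hVopen β hβ))
    have hsub : V α hα ∩ V β hβ ⊆
        symmDiff (A α) (V α hα) ∪ symmDiff (A β) (V β hβ) := by
      intro x ⟨hx1, hx2⟩
      by_cases hxA : x ∈ A α
      · by_cases hxB : x ∈ A β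
        · exact absurd (Set.disjoint_iff.1 (hdisj α β hα hβ hne') ⟨hxA, hxB⟩) (Set.notMem_empty x)
        · exact Or.inr (Or.inr ⟨hx2, hxB⟩)
      · exact Or.inl (Or.inr ⟨hx1, hxA⟩)
    exact ((hVmeagre α hα).union' (hVmeagre β hβ)).mono hsub
  -- countability via separability
  have hcnt : Countable I := by
    refine Pairwise.countable_of_isOpen_disjoint
      (s := fun (p : I) => V p.1 p.2) ?_ (fun p => hVopen p.1 p.2) (fun p => hne p.1 p.2)
    intro p q hpq
    rw [Function.onFun, Set.disjoint_iff_inter_eq_empty]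
    exact hVdisj p.1 q.1 p.2 q.2 (fun h => hpq (Subtype.ext h))
  -- contradiction with cardinality of ω₁
  have hcard : #I = Cardinal.lift.{1,0} (Cardinal.aleph 1) := by
    have h2 := Ordinal.mk_Iio_ordinal (Cardinal.aleph 1).ord
    rw [Cardinal.card_ord] at h2
    exact h2
  have : #I ≤ ℵ₀ := Cardinal.mk_le_aleph0
  rw [hcard, ← Cardinal.lift_aleph0.{1,0}, Cardinal.lift_le] at this
  exact absurd this (not_le.2 Cardinal.aleph0_lt_aleph_one)
end

section
/- Let κ be a singular strong limit cardinal of countable cofinality. Then there exists a Σ¹₁-subset of ᵚκ that is not a Π¹₁-subset; that is, there exists a subtree U of ∏(^{<ω}κ)² such that for every subtree T of (^{<ω}κ)², the projection p[T] is not equal to the complement ᵚκ \ p[U]. -/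
universe u

open Cardinal

namespace Statement2

variable {α : Type u}

/-- A subtree of `(^{<ω}κ)²`: a set of pairs of finite sequences in `κ` of equal length
that is closed under taking (pairs of) initial segments. -/
def IsSubtree (T : Set (List α × List α)) : Prop :=
  ∀ p ∈ T, p.1.length = p.2.length ∧ ∀ m : ℕ, (p.1.take m, p.2.take m) ∈ T

/-- The projection `p[T]` of a subtree `T` of `(^{<ω}κ)²`: the set of all `x ∈ ᵚκ` such that
for some `y ∈ ᵚκ`, all pairs of initial segments `⟨x↾m, y↾m⟩` lie in `T`. -/
def proj (T : Set (List α × List α)) : Set (ℕ → α) :=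
  {x | ∃ y : ℕ → α, ∀ m : ℕ,
    ((List.ofFn fun i : Fin m => x i), (List.ofFn fun i : Fin m => y i)) ∈ T}

end Statement2

open Statement2

namespace S2Aux

open Statement2

variable {α : Type u}

lemma ofFn_congr' (x : ℕ → α) {m m' : ℕ} (h : m = m') :
    (List.ofFn fun i : Fin m => x i) = List.ofFn fun i : Fin m' => x i := by
  subst h; rfl

lemma take_ofFn' (x : ℕ → α) (j m : ℕ) :
    (List.ofFn fun i : Fin m => x i).take j = List.ofFn fun i : Fin (min j m) => x i := by
  apply List.ext_getElem
  · simp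
  · intro n h1 h2
    simp [List.getElem_take]

lemma getElem?_ofFn' (x : ℕ → α) {n m : ℕ} (h : n < m) :
    (List.ofFn fun i : Fin m => x i)[n]? = some (x n) := by
  rw [List.getElem?_eq_some_iff]
  refine ⟨by simpa using h, by simp⟩

theorem key (idx : List α × List α → ℕ) (d : ℕ → α → Set (List α × List α))
    (hd : ∀ (n : ℕ) (X : Set (List α × List α)), ∃ c : α,
      ∀ p, idx p = n → (p ∈ d n c ↔ p ∈ X)) :
    ∃ U : Set (List α × List α), IsSubtree U ∧
      ∀ T : Set (List α × List α), IsSubtree T → proj T ≠ (proj U)ᶜ := by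
  classical
  set U : Set (List α × List α) :=
    {p | p.1.length = p.2.length ∧ ∀ j n a, idx (p.1.take j, p.2.take j) = n →
      p.1[n]? = some a → (p.1.take j, p.2.take j) ∈ d n a} with hUdef
  have hchar : ∀ x : ℕ → α, x ∈ proj U ↔ ∃ y : ℕ → α, ∀ j n : ℕ,
      idx ((List.ofFn fun i : Fin j => x i), (List.ofFn fun i : Fin j => y i)) = n →
      ((List.ofFn fun i : Fin j => x i), (List.ofFn fun i : Fin j => y i)) ∈ d n (x n) := by
    intro x
    constructor
    · rintro ⟨y, hy⟩
      refine ⟨y, fun j n hidx => ?_⟩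
      have hm := (hy (max j (n + 1))).2 j n (x n) ?_ ?_
      · have h1 : (List.ofFn fun i : Fin (max j (n+1)) => x i).take j
            = List.ofFn fun i : Fin j => x i := by
          rw [take_ofFn', ofFn_congr' x (Nat.min_eq_left (le_max_left _ _))]
        have h2 : (List.ofFn fun i : Fin (max j (n+1)) => y i).take j
            = List.ofFn fun i : Fin j => y i := by
          rw [take_ofFn', ofFn_congr' y (Nat.min_eq_left (le_max_left _ _))]
        rwa [h1, h2] at hm
      · have h1 : (List.ofFn fun i : Fin (max j (n+1)) => x i).take j
            = List.ofFn fun i : Fin j => x i := by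
          rw [take_ofFn', ofFn_congr' x (Nat.min_eq_left (le_max_left _ _))]
        have h2 : (List.ofFn fun i : Fin (max j (n+1)) => y i).take j
            = List.ofFn fun i : Fin j => y i := by
          rw [take_ofFn', ofFn_congr' y (Nat.min_eq_left (le_max_left _ _))]
        rw [h1, h2]; exact hidx
      · exact getElem?_ofFn' x (lt_of_lt_of_le (Nat.lt_succ_self n) (le_max_right _ _))
    · rintro ⟨y, hy⟩
      refine ⟨y, fun m => ⟨by simp, fun j n a hidx ha => ?_⟩⟩
      rw [take_ofFn' x, take_ofFn' y] at hidx ⊢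
      obtain ⟨hn, hxa⟩ := List.getElem?_eq_some_iff.mp ha
      have hxa' : a = x n := by simpa using hxa.symm
      subst hxa'
      exact hy (min j m) n hidx
  refine ⟨U, ?_, ?_⟩
  · rintro p ⟨hlen, hp⟩
    refine ⟨hlen, fun m => ⟨by simp [hlen], fun j n a hidx ha => ?_⟩⟩
    simp only [List.take_take] at hidx ha ⊢
    obtain ⟨hn, hxa⟩ := List.getElem?_eq_some_iff.mp ha
    have hnm : n < m := lt_of_lt_of_le hn (by simp [List.length_take])
    have ha' : p.1[n]? = some a := by
      rw [List.getElem?_eq_some_iff]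
      have hn' : n < p.1.length := lt_of_lt_of_le hn (by simp [List.length_take])
      exact ⟨hn', by rw [← hxa]; exact (List.getElem_take).symm⟩
    exact hp (min j m) n a hidx ha'
  · intro T hT hEq
    choose c hc using hd
    set x : ℕ → α := fun n => c n T with hx
    have hx1 : x ∈ proj U ↔ x ∈ proj T := by
      rw [hchar]
      constructor
      · rintro ⟨y, hy⟩
        refine ⟨y, fun m => ?_⟩
        set p := ((List.ofFn fun i : Fin m => x i), (List.ofFn fun i : Fin m => y i))
        exact (hc (idx p) T p rfl).mp (hy m (idx p) rfl)
      · rintro ⟨y, hy⟩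
        refine ⟨y, fun j n hidx => ?_⟩
        exact (hc n T _ hidx).mpr (hy j)
    rw [hEq] at hx1
    simp only [Set.mem_compl_iff] at hx1
    tauto

end S2Aux


/-- Let `κ` be a singular strong limit cardinal of countable cofinality
(`κ` uncountable, `cof κ = ω`, and `2^μ < κ` for all `μ < κ`). Then there exists a
`Σ¹₁`-subset of `ᵚκ` that is not a `Π¹₁`-subset: there is a subtree `U` of `(^{<ω}κ)²` such
that for every subtree `T` of `(^{<ω}κ)²`, the projection `p[T]` is not equal to the
complement of `p[U]`. Here the set `κ` is represented by the canonical type `κ.ord.ToType`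
of order type `κ`. -/
theorem statement2 (κ : Cardinal.{u}) (huncount : ℵ₀ < κ)
    (hstronglimit : ∀ μ < κ, (2 : Cardinal.{u}) ^ μ < κ)
    (hcof : κ.ord.cof = ℵ₀) :
    ∃ U : Set (List κ.ord.ToType × List κ.ord.ToType), IsSubtree U ∧
      ∀ T : Set (List κ.ord.ToType × List κ.ord.ToType), IsSubtree T →
        proj T ≠ (proj U)ᶜ := by
  classical
  have hκ0 : ℵ₀ ≤ κ := huncount.le
  have hmk : #κ.ord.ToType = κ := mk_ord_toType κ
  have hinf : Infinite κ.ord.ToType := infinite_iff.mpr (by rw [hmk]; exact hκ0)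
  have hLL : #(List κ.ord.ToType × List κ.ord.ToType) = #κ.ord.ToType := by
    simp only [mk_prod, mk_list_eq_mk, lift_id, hmk]
    exact mul_eq_self hκ0
  obtain ⟨e⟩ := Cardinal.eq.mp hLL
  haveI hwo : IsWellOrder κ.ord.ToType (fun a b => a < b) := isWellOrder_lt
  obtain ⟨S, hS, hScard⟩ := Order.exists_cof_eq κ.ord.ToType
  rw [Ordinal.cof_toType, hcof] at hScard
  obtain ⟨hden⟩ : Nonempty (Denumerable ↥S) := Cardinal.denumerable_iff.mpr hScard
  have g : ↥S ≃ ℕ := @Denumerable.eqv _ hden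
  set f : ℕ → κ.ord.ToType := fun n => (g.symm n : κ.ord.ToType) with hfdef
  have hf : ∀ a, ∃ n, a ≤ f n := by
    intro a
    obtain ⟨b, hbS, hba⟩ := hS a
    refine ⟨g ⟨b, hbS⟩, ?_⟩
    simpa [hfdef] using hba
  set idx : List κ.ord.ToType × List κ.ord.ToType → ℕ := fun p => Nat.find (hf (e p))
    with hidxdef
  have hIic : ∀ a : κ.ord.ToType, #(Set.Iic a) < κ := by
    intro a
    have h0 : #(Set.Iio a) < κ := by
      have h1 := Ordinal.card_typein (r := fun x y : κ.ord.ToType => x < y) a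
      have hlt : (Ordinal.typein (fun x y : κ.ord.ToType => x < y)).toRelEmbedding a
          < κ.ord := Ordinal.typein_lt_self a
      have h2 := lt_ord.mp hlt
      rw [h1] at h2
      exact h2
    calc #(Set.Iic a) = #(insert a (Set.Iio a) : Set _) := by rw [Set.Iio_insert]
      _ ≤ #(Set.Iio a) + 1 := mk_insert_le
      _ < κ := add_lt_of_lt hκ0 h0 (one_lt_aleph0.trans huncount)
  have hsmall : ∀ n : ℕ, #{p // idx p = n} < κ := by
    intro n
    have h1 : #{p // idx p = n} ≤ #(Set.Iic (f n)) := by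
      refine ⟨⟨fun p => ⟨e p.1, ?_⟩, ?_⟩⟩
      · have := Nat.find_spec (hf (e p.1))
        rwa [show Nat.find (hf (e p.1)) = n from p.2] at this
      · intro p q hpq
        apply Subtype.ext
        apply e.injective
        exact congrArg Subtype.val hpq
    exact h1.trans_lt (hIic (f n))
  have hemb : ∀ n : ℕ, Nonempty (Set {p // idx p = n} ↪ κ.ord.ToType) := by
    intro n
    refine (Cardinal.le_def _ _).mp ?_
    rw [mk_set, hmk]
    exact (hstronglimit _ (hsmall n)).le
  have emb := fun n => (hemb n).some
  refine S2Aux.key idx (fun n a => Subtype.val '' (Function.invFun (emb n) a)) (fun n X => ?_)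
  set X' : Set {p // idx p = n} := {q | q.1 ∈ X} with hX'
  refine ⟨emb n X', fun p hp => ?_⟩
  have hinv : Function.invFun (emb n) (emb n X') = X' :=
    Function.leftInverse_invFun (emb n).injective X'
  beta_reduce
  rw [hinv]
  constructor
  · rintro ⟨q, hq, rfl⟩; exact hq
  · intro hpX; exact ⟨⟨p, hp⟩, hpX, rfl⟩
end

section
/- Let κ be a singular strong limit cardinal of countable cofinality, fix a bijection g : κ × κ → κ, let κ⃗ = ⟨κ_m : m < ω⟩ be a strictly increasing sequence of cardinals cofinal in κ, and let a⃗ = ⟨a_α : α < κ⟩ be a sequence of subsets of κ. If B is a Σ¹₁-subset of ᵚκ with B ⊆ WO(κ⃗, a⃗), then there exists an ordinal γ < κ⁺ such that ‖x‖ < γ for all x ∈ B. -/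
universe u

open Cardinal

namespace Statement3

variable {α : Type u}

/-- A subtree of `(^{<ω}κ)²`: a set of pairs of finite sequences in `κ` of equal length
that is closed under taking (pairs of) initial segments. -/
def IsSubtree (T : Set (List α × List α)) : Prop :=
  ∀ p ∈ T, p.1.length = p.2.length ∧ ∀ m : ℕ, (p.1.take m, p.2.take m) ∈ T

/-- The projection `p[T]` of a subtree `T` of `(^{<ω}κ)²`. -/
def proj (T : Set (List α × List α)) : Set (ℕ → α) :=
  {x | ∃ y : ℕ → α, ∀ m : ℕ,
    ((List.ofFn fun i : Fin m => x i), (List.ofFn fun i : Fin m => y i)) ∈ T}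

/-- Given a bijection `g : κ × κ ≃ κ` and a subset `z ⊆ κ`, the binary relation `⊲_z` on `κ`
given by `a ⊲_z b ↔ g(a, b) ∈ z`. -/
def relOf (g : α × α ≃ α) (z : Set α) : α → α → Prop :=
  fun a b => g (a, b) ∈ z

/-- The canonical ordinal index (below `κ.ord`) of an element of `κ.ord.ToType`. -/
noncomputable def idx (κ : Cardinal.{u}) (b : κ.ord.ToType) : Ordinal.{u} :=
  ((Ordinal.ToType.mk (o := κ.ord)).symm b : Set.Iio κ.ord)

end Statement3

open Statement3

namespace S3P

variable {β : Type u} (pair : β → β → β) (D : ℕ → β → Prop) (a : β → Set β)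
  (T : Set (List β × List β))

def inS (p : List β × List β × List β) : Prop :=
  (p.1, p.2.1) ∈ T ∧ p.2.2.length = p.1.length ∧
  ∀ (i j m : ℕ) (hij : i < j) (hj : j < p.2.2.length) (hm : m < p.1.length),
    D m (pair (p.2.2[j]'hj) (p.2.2[i]'(hij.trans hj))) →
    pair (p.2.2[j]'hj) (p.2.2[i]'(hij.trans hj)) ∈ a (p.1[m]'hm)

def step (p q : List β × List β × List β) : Prop :=
  inS pair D a T p ∧ inS pair D a T q ∧ p.1.length = q.1.length + 1 ∧
  q.1 <+: p.1 ∧ q.2.1 <+: p.2.1 ∧ q.2.2 <+: p.2.2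

theorem wf_step (hT : IsSubtree T) (hD : ∀ e : β, ∃ m, D m e)
    (hgood : ∀ x ∈ proj T, ∃ y : Set β,
      WellFounded (fun b c => pair b c ∈ y) ∧ ∀ m : ℕ, a (x m) ⊆ y) :
    WellFounded (step pair D a T) := by
  by_contra hwf
  obtain ⟨p0, hp0⟩ : ∃ p, ¬ Acc (step pair D a T) p := by
    by_contra h; push_neg at h; exact hwf ⟨h⟩
  have hex : ∀ p : {p // ¬ Acc (step pair D a T) p},
      ∃ q : {p // ¬ Acc (step pair D a T) p}, step pair D a T q.1 p.1 := by
    rintro ⟨p, hp⟩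
    have : ∃ q, step pair D a T q p ∧ ¬ Acc (step pair D a T) q := by
      by_contra hq; push_neg at hq
      exact hp (Acc.intro p fun q h => hq q h)
    obtain ⟨q, h1, h2⟩ := this
    exact ⟨⟨q, h2⟩, h1⟩
  choose nxt hnxt using hex
  let F : ℕ → {p // ¬ Acc (step pair D a T) p} :=
    fun n => Nat.rec ⟨p0, hp0⟩ (fun _ p => nxt p) n
  set f : ℕ → List β × List β × List β := fun n => (F n).1 with hf
  have hstep : ∀ n, step pair D a T (f (n + 1)) (f n) := fun n => hnxt (F n)
  have hS : ∀ n, inS pair D a T (f n) := fun n => (hstep n).2.1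
  set L := (f 0).1.length with hL
  have hlen : ∀ n, (f n).1.length = L + n := by
    intro n; induction n with
    | zero => simp [hL]
    | succ n ih => have := (hstep n).2.2.1; omega
  have hlen3 : ∀ n, (f n).2.2.length = L + n := fun n => by
    rw [(hS n).2.1, hlen]
  have hlen2 : ∀ n, (f n).2.1.length = L + n := fun n => by
    rw [← (hT _ (hS n).1).1, hlen]
  have hpre1 : ∀ {k n : ℕ}, k ≤ n → (f k).1 <+: (f n).1 := by
    intro k n h
    induction n, h using Nat.le_induction with
    | base => exact List.prefix_refl _
    | succ n _ ih => exact ih.trans (hstep n).2.2.2.1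
  have hpre2 : ∀ {k n : ℕ}, k ≤ n → (f k).2.1 <+: (f n).2.1 := by
    intro k n h
    induction n, h using Nat.le_induction with
    | base => exact List.prefix_refl _
    | succ n _ ih => exact ih.trans (hstep n).2.2.2.2.1
  have hpre3 : ∀ {k n : ℕ}, k ≤ n → (f k).2.2 <+: (f n).2.2 := by
    intro k n h
    induction n, h using Nat.le_induction with
    | base => exact List.prefix_refl _
    | succ n _ ih => exact ih.trans (hstep n).2.2.2.2.2
  set x : ℕ → β := fun k => (f (k + 1)).1[k]'(by have := hlen (k + 1); omega) with hx
  set w : ℕ → β := fun k => (f (k + 1)).2.1[k]'(by have := hlen2 (k + 1); omega) with hw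
  set u : ℕ → β := fun k => (f (k + 1)).2.2[k]'(by have := hlen3 (k + 1); omega) with hu
  have key1 : ∀ (n k : ℕ) (hk : k < (f n).1.length), (f n).1[k]'hk = x k := by
    intro n k hk
    rcases le_total n (k + 1) with h | h
    · exact (hpre1 h).getElem hk
    · exact ((hpre1 h).getElem (by have := hlen (k + 1); omega)).symm
  have key2 : ∀ (n k : ℕ) (hk : k < (f n).2.1.length), (f n).2.1[k]'hk = w k := by
    intro n k hk
    rcases le_total n (k + 1) with h | h
    · exact (hpre2 h).getElem hk
    · exact ((hpre2 h).getElem (by have := hlen2 (k + 1); omega)).symm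
  have key3 : ∀ (n k : ℕ) (hk : k < (f n).2.2.length), (f n).2.2[k]'hk = u k := by
    intro n k hk
    rcases le_total n (k + 1) with h | h
    · exact (hpre3 h).getElem hk
    · exact ((hpre3 h).getElem (by have := hlen3 (k + 1); omega)).symm
  have hxmem : x ∈ proj T := by
    refine ⟨w, fun m => ?_⟩
    have h1 := (hT _ (hS m).1).2 m
    have e1 : (f m).1.take m = List.ofFn fun i : Fin m => x i := by
      apply List.ext_getElem
      · simp [hlen]
      · intro i h1' h2'
        simp only [List.getElem_take, List.getElem_ofFn]
        exact key1 m i _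
    have e2 : (f m).2.1.take m = List.ofFn fun i : Fin m => w i := by
      apply List.ext_getElem
      · simp [hlen2]
      · intro i h1' h2'
        simp only [List.getElem_take, List.getElem_ofFn]
        exact key2 m i _
    rw [← e1, ← e2]
    exact h1
  obtain ⟨y, hywf, hysub⟩ := hgood x hxmem
  have hdesc : ∀ i j : ℕ, i < j → pair (u j) (u i) ∈ y := by
    intro i j hij
    obtain ⟨m, hm⟩ := hD (pair (u j) (u i))
    have hj' : j < (f (j + m + 1)).2.2.length := by have := hlen3 (j + m + 1); omega
    have hm' : m < (f (j + m + 1)).1.length := by have := hlen (j + m + 1); omega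
    have h := (hS (j + m + 1)).2.2 i j m hij hj' hm'
    rw [key3 (j + m + 1) j hj', key3 (j + m + 1) i (hij.trans hj'),
      key1 (j + m + 1) m hm'] at h
    exact hysub m (h hm)
  obtain ⟨b, ⟨k, rfl⟩, hmin⟩ := hywf.has_min (Set.range u) ⟨u 0, 0, rfl⟩
  exact hmin (u (k + 1)) ⟨k + 1, rfl⟩ (hdesc k (k + 1) (Nat.lt_succ_self k))

theorem rank_lt_ord {β : Type u} (rel : β → β → Prop) [IsWellFounded β rel]
    {c : Cardinal.{u}} (hc : c.IsRegular) (hcard : #β < c) (p : β) :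
    IsWellFounded.rank rel p < c.ord := by
  refine (IsWellFounded.wf (r := rel)).induction
    (C := fun p => IsWellFounded.rank rel p < c.ord) p ?_
  intro p IH
  rw [IsWellFounded.rank_eq]
  refine Ordinal.iSup_lt_ord ?_ ?_
  · rw [hc.cof_eq]
    exact (mk_subtype_le _).trans_lt hcard
  · rintro ⟨b, hb⟩
    exact (Cardinal.isSuccLimit_ord hc.aleph0_le).succ_lt (IH b hb)

theorem type_le (x w : ℕ → β)
    (hxw : ∀ m : ℕ, ((List.ofFn fun i : Fin m => x i), (List.ofFn fun i : Fin m => w i)) ∈ T)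
    (y : Set β) (r : β → β → Prop) [hwo : IsWellOrder β r]
    (hr : ∀ b c, r b c ↔ pair b c ∈ y)
    (hlev : ∀ m : ℕ, {b | b ∈ y ∧ D m b} = a (x m))
    (hwf : WellFounded (step pair D a T)) :
    Ordinal.type r ≤ @IsWellFounded.rank _ (step pair D a T) ⟨hwf⟩ ([], [], []) := by
  haveI inst : IsWellFounded (List β × List β × List β) (step pair D a T) := ⟨hwf⟩
  set node : List β → List β × List β × List β :=
    fun l => (List.ofFn fun i : Fin l.length => x i, List.ofFn fun i : Fin l.length => w i, l)
    with hnode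
  set Desc : List β → Prop :=
    fun l => ∀ (i j : ℕ) (hij : i < j) (hj : j < l.length), r (l[j]'hj) (l[i]'(hij.trans hj))
    with hDesc
  have hofn : ∀ (v : ℕ → β) {n m : ℕ} (h : n = m),
      (List.ofFn fun i : Fin n => v i) = List.ofFn fun i : Fin m => v i := by
    intro v n m h; subst h; rfl
  have hofpre : ∀ (v : ℕ → β) (n : ℕ),
      (List.ofFn fun i : Fin n => v i) <+: List.ofFn fun i : Fin (n + 1) => v i := by
    intro v n
    refine ⟨[v n], ?_⟩
    rw [List.ofFn_succ' (fun i : Fin (n + 1) => v i)]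
    simp [List.concat_eq_append]
  have hinS : ∀ l : List β, Desc l → inS pair D a T (node l) := by
    intro l hd
    refine ⟨hxw l.length, by simp [hnode], ?_⟩
    intro i j m hij hj hm hDm
    have hm' : m < l.length := by simpa [hnode] using hm
    have hxm : (node l).1[m]'hm = x m := by simp [hnode]
    rw [hxm, ← hlev m]
    exact ⟨(hr _ _).1 (hd i j hij hj), hDm⟩
  have hstep2 : ∀ (l : List β) (c : β), Desc l → Desc (l ++ [c]) →
      step pair D a T (node (l ++ [c])) (node l) := by
    intro l c hd hd'
    have hlen : (l ++ [c]).length = l.length + 1 := by simp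
    refine ⟨hinS _ hd', hinS _ hd, by simp [hnode], ?_, ?_, List.prefix_append l [c]⟩
    · show (List.ofFn fun i : Fin l.length => x i) <+:
        List.ofFn fun i : Fin (l ++ [c]).length => x i
      rw [hofn x hlen]
      exact hofpre x l.length
    · show (List.ofFn fun i : Fin l.length => w i) <+:
        List.ofFn fun i : Fin (l ++ [c]).length => w i
      rw [hofn w hlen]
      exact hofpre w l.length
  have hdesc_app : ∀ (l : List β) (c : β), Desc l →
      (∀ i (hi : i < l.length), r c (l[i]'hi)) → Desc (l ++ [c]) := by
    intro l c hd hc i j hij hj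
    have hj1 : j < l.length + 1 := by simpa using hj
    by_cases hjl : j < l.length
    · have hi : i < l.length := hij.trans hjl
      have e1 : (l ++ [c])[j]'hj = l[j]'hjl := List.getElem_append_left hjl
      have e2 : (l ++ [c])[i]'(hij.trans hj) = l[i]'hi := List.getElem_append_left hi
      rw [e1, e2]
      exact hd i j hij hjl
    · have hjeq : j = l.length := by omega
      have hi : i < l.length := by omega
      have e1 : (l ++ [c])[j]'hj = c := List.getElem_concat_length hjeq hj
      have e2 : (l ++ [c])[i]'(hij.trans hj) = l[i]'hi := List.getElem_append_left hi
      rw [e1, e2]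
      exact hc i hi
  have hbelow : ∀ (l : List β) (b c : β), Desc (l ++ [b]) → r c b →
      ∀ i (hi : i < (l ++ [b]).length), r c ((l ++ [b])[i]'hi) := by
    intro l b c hd hcb i hi
    have hlb : (l ++ [b]).length = l.length + 1 := by simp
    by_cases hil : i < l.length
    · have hb : (l ++ [b])[l.length]'(by omega) = b :=
        List.getElem_concat_length rfl (by omega)
      have h1 := hd i l.length hil (by omega)
      rw [hb] at h1
      exact IsTrans.trans c b _ hcb h1
    · have hieq : i = l.length := by omega
      have e : (l ++ [b])[i]'hi = b := List.getElem_concat_length hieq hi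
      rw [e]; exact hcb
  have main : ∀ b : β, ∀ l : List β, Desc (l ++ [b]) →
      IsWellFounded.rank r b ≤ IsWellFounded.rank (step pair D a T) (node (l ++ [b])) := by
    intro b
    refine (IsWellFounded.wf (r := r)).induction
      (C := fun b => ∀ l : List β, Desc (l ++ [b]) →
        IsWellFounded.rank r b ≤ IsWellFounded.rank (step pair D a T) (node (l ++ [b]))) b ?_
    intro b IH l hd
    rw [IsWellFounded.rank_eq]
    refine Ordinal.iSup_le ?_
    rintro ⟨c, hc⟩
    have hd' : Desc ((l ++ [b]) ++ [c]) := hdesc_app _ _ hd (hbelow l b c hd hc)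
    have h1 := IH c hc (l ++ [b]) hd'
    have h2 := hstep2 (l ++ [b]) c hd hd'
    have h3 := IsWellFounded.rank_lt_of_rel (r := step pair D a T) h2
    exact le_trans (Order.succ_le_succ h1) (Order.succ_le_of_lt h3)
  by_contra hlt
  push_neg at hlt
  obtain ⟨b, hb⟩ := Ordinal.typein_surj r hlt
  have h00 : Desc ([] : List β) := by
    intro i j hij hj
    simp at hj
  have h0 : Desc ([] ++ [b]) := by
    intro i j hij hj
    simp at hj
    omega
  have h1 := main b [] h0
  have h2 := hstep2 [] b h00 h0
  have h3 := IsWellFounded.rank_lt_of_rel (r := step pair D a T) h2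
  have h4 : node ([] : List β) = (([], [], []) : List β × List β × List β) := by
    simp [hnode]
  rw [h4] at h3
  have h5 : IsWellFounded.rank r b = Ordinal.typein r b :=
    congrFun (IsWellFounded.rank_eq_typein r) b
  have : Ordinal.typein r b < Ordinal.typein r b := by
    calc Ordinal.typein r b = IsWellFounded.rank r b := h5.symm
    _ ≤ IsWellFounded.rank (step pair D a T) (node ([] ++ [b])) := h1
    _ < IsWellFounded.rank (step pair D a T) ([], [], []) := h3
    _ = Ordinal.typein r b := hb.symm
  exact this.false

end S3P


/-- Boundedness lemma. Let `κ` be a singular strong limit cardinal of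
countable cofinality, represented by the type `κ.ord.ToType`, let `g : κ × κ ≃ κ` be a
bijection, let `⟨κ_m : m < ω⟩` be a strictly increasing sequence of cardinals cofinal in `κ`
and let `⟨a_β : β < κ⟩` be a sequence of subsets of `κ`. If `B` is a `Σ¹₁`-subset of `ᵚκ`
with `B ⊆ WO(κ⃗, a⃗)`, then there is an ordinal `γ < κ⁺` such that `‖x‖ < γ` for all `x ∈ B`,
i.e. every `y ∈ WO_κ` witnessing `x ∈ WO(κ⃗, a⃗)` codes a well-ordering of `κ` of order type
less than `γ`. -/
theorem statement3 (κ : Cardinal.{u}) (huncount : ℵ₀ < κ)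
    (hstronglimit : ∀ μ < κ, (2 : Cardinal.{u}) ^ μ < κ)
    (hcof : κ.ord.cof = ℵ₀)
    (g : κ.ord.ToType × κ.ord.ToType ≃ κ.ord.ToType)
    (κseq : ℕ → Cardinal.{u}) (hκseqlt : ∀ m, κseq m < κ) (hκseqmono : StrictMono κseq)
    (hκseqcof : ∀ c < κ, ∃ m, c < κseq m)
    (a : κ.ord.ToType → Set κ.ord.ToType)
    (B : Set (ℕ → κ.ord.ToType))
    (hB : ∃ T : Set (List κ.ord.ToType × List κ.ord.ToType), IsSubtree T ∧ B = proj T)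
    (hBsub : ∀ x ∈ B, ∃ y : Set κ.ord.ToType, IsWellOrder κ.ord.ToType (relOf g y) ∧
      ∀ m : ℕ, {b | b ∈ y ∧ idx κ b < (κseq m).ord} = a (x m)) :
    ∃ γ : Ordinal.{u}, γ < (Order.succ κ).ord ∧
      ∀ x ∈ B, ∀ y : Set κ.ord.ToType,
        ∀ hwo : IsWellOrder κ.ord.ToType (relOf g y),
          (∀ m : ℕ, {b | b ∈ y ∧ idx κ b < (κseq m).ord} = a (x m)) →
          @Ordinal.type κ.ord.ToType (relOf g y) hwo < γ := by

  obtain ⟨T, hT, hBT⟩ := hB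
  subst hBT
  set pair : κ.ord.ToType → κ.ord.ToType → κ.ord.ToType := fun b c => g (b, c) with hpair
  set D : ℕ → κ.ord.ToType → Prop := fun m e => idx κ e < (κseq m).ord with hDdef
  have hD : ∀ e, ∃ m, D m e := by
    intro e
    have h1 : idx κ e < κ.ord := ((Ordinal.ToType.mk (o := κ.ord)).symm e).2
    have h2 : (idx κ e).card < κ := Cardinal.lt_ord.1 h1
    obtain ⟨m, hm⟩ := hκseqcof _ h2
    exact ⟨m, Cardinal.lt_ord.2 hm⟩
  have hgood : ∀ x ∈ proj T, ∃ y : Set κ.ord.ToType,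
      WellFounded (fun b c => pair b c ∈ y) ∧ ∀ m : ℕ, a (x m) ⊆ y := by
    intro x hx
    obtain ⟨y, hwo, hlev⟩ := hBsub x hx
    refine ⟨y, hwo.toIsWellFounded.wf, fun m => ?_⟩
    rw [← hlev m]
    exact fun b hb => hb.1
  have hwf := S3P.wf_step pair D a T hT hD hgood
  haveI inst : IsWellFounded (List κ.ord.ToType × List κ.ord.ToType × List κ.ord.ToType)
      (S3P.step pair D a T) := ⟨hwf⟩
  refine ⟨@IsWellFounded.rank _ (S3P.step pair D a T) ⟨hwf⟩ ([], [], []) + 1, ?_, ?_⟩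
  · have hmk : #(κ.ord.ToType) = κ := by rw [Cardinal.mk_toType, Cardinal.card_ord]
    haveI : Infinite κ.ord.ToType := Cardinal.infinite_iff.2 (by rw [hmk]; exact huncount.le)
    have hlist : #(List κ.ord.ToType) = κ := by rw [Cardinal.mk_list_eq_mk, hmk]
    have hP : #(List κ.ord.ToType × List κ.ord.ToType × List κ.ord.ToType) ≤ κ := by
      rw [Cardinal.mk_prod, Cardinal.mk_prod, hlist, Cardinal.lift_id, Cardinal.lift_id,
        Cardinal.mul_eq_self huncount.le, Cardinal.mul_eq_self huncount.le]
    have hreg : (Order.succ κ).IsRegular := Cardinal.isRegular_succ huncount.le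
    have hR := S3P.rank_lt_ord (S3P.step pair D a T) hreg
      (hP.trans_lt (Order.lt_succ κ)) ([], [], [])
    have hlim := Cardinal.isSuccLimit_ord hreg.aleph0_le
    rw [Ordinal.add_one_eq_succ]
    exact hlim.succ_lt hR
  · intro x hx y hwo hlev
    haveI := hwo
    obtain ⟨wb, hxw⟩ := hx
    have hle := S3P.type_le pair D a T x wb hxw y (relOf g y)
      (fun b c => Iff.rfl) (fun m => hlev m) hwf
    rw [Ordinal.add_one_eq_succ]
    exact hle.trans_lt (Order.lt_succ _)
end

section
/- Let κ be a singular strong limit cardinal of countable cofinality and fix a bijection g : κ × κ → κ. For every continuous function ι : ᵚκ → 𝒫(κ) with ι(u) ∈ WO_κ for all u ∈ ᵚκ, there exists an ordinal γ < κ⁺ such that otp(ι(u)) < γ for all u ∈ ᵚκ. -/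
universe u

open Cardinal

namespace Statement4

variable {α : Type u}

/-- Given a bijection `g : κ × κ ≃ κ` and a subset `z ⊆ κ`, the binary relation `⊲_z` on `κ`
given by `a ⊲_z b ↔ g(a, b) ∈ z`. -/
def relOf (g : α × α ≃ α) (z : Set α) : α → α → Prop :=
  fun a b => g (a, b) ∈ z

/-- The canonical ordinal index (below `κ.ord`) of an element of `κ.ord.ToType`. -/
noncomputable def idx (κ : Cardinal.{u}) (b : κ.ord.ToType) : Ordinal.{u} :=
  ((Ordinal.ToType.mk (o := κ.ord)).symm b : Set.Iio κ.ord)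

/-- The topology on `ᵚκ` whose basic open sets consist of all functions extending a given
finite sequence. -/
def seqTop (α : Type u) : TopologicalSpace (ℕ → α) :=
  TopologicalSpace.generateFrom
    {S | ∃ (n : ℕ) (s : ℕ → α), S = {f | ∀ i < n, f i = s i}}

/-- The topology on `𝒫(κ)` whose basic open sets consist of all subsets of `κ` whose
intersection with a given ordinal `η < κ` equals a fixed subset of `η`. -/
noncomputable def powTop (κ : Cardinal.{u}) : TopologicalSpace (Set κ.ord.ToType) :=
  TopologicalSpace.generateFrom
    {S | ∃ (η : Ordinal.{u}) (a : Set κ.ord.ToType), η < κ.ord ∧ (∀ b ∈ a, idx κ b < η) ∧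
      S = {y | {b | b ∈ y ∧ idx κ b < η} = a}}

end Statement4

open Statement4


section Aux

variable {X : Type u}

/-- `u` extends the finite sequence `s`. -/
def extList (u : ℕ → X) (s : List X) : Prop :=
  ∀ i (h : i < s.length), u i = s[i]

theorem extList_ofFn (u : ℕ → X) (n : ℕ) : extList u (List.ofFn fun i : Fin n => u i) := by
  intro i h
  simp only [List.length_ofFn] at h
  simp [List.getElem_ofFn]

theorem prefix_ofFn_of_extList {u : ℕ → X} {s : List X} (hs : extList u s) {m : ℕ}
    (hm : s.length ≤ m) : s <+: (List.ofFn fun i : Fin m => u i) := by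
  rw [List.prefix_iff_eq_take]
  apply List.ext_getElem
  · simp [hm, Nat.min_eq_left hm]
  · intro i h1 h2
    have hi : i < s.length := h1
    rw [List.getElem_take]
    rw [List.getElem_ofFn]
    exact (hs i hi).symm

/-- The auxiliary well-founded relation. -/
def stepRel (g : X × X ≃ X) (ι : (ℕ → X) → Set X) : (List X × X) → (List X × X) → Prop :=
  fun p q => q.1 <+: p.1 ∧ ∀ u : ℕ → X, extList u p.1 → relOf g (ι u) p.2 q.2

end Aux

/-- Let `κ` be a singular strong limit cardinal of countable cofinality,
represented by the type `κ.ord.ToType`, and fix a bijection `g : κ × κ ≃ κ`. For every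
continuous function `ι : ᵚκ → 𝒫(κ)` all of whose values code well-orderings of `κ`, there
is an ordinal `γ < κ⁺` bounding the order types of all the coded well-orderings. -/
theorem statement4 (κ : Cardinal.{u}) (huncount : ℵ₀ < κ)
    (hstronglimit : ∀ μ < κ, (2 : Cardinal.{u}) ^ μ < κ)
    (hcof : κ.ord.cof = ℵ₀)
    (g : κ.ord.ToType × κ.ord.ToType ≃ κ.ord.ToType)
    (ι : (ℕ → κ.ord.ToType) → Set κ.ord.ToType)
    (hcont : @Continuous _ _ (seqTop κ.ord.ToType) (powTop κ) ι)
    (hwo : ∀ u : ℕ → κ.ord.ToType, IsWellOrder κ.ord.ToType (relOf g (ι u))) :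
    ∃ γ : Ordinal.{u}, γ < (Order.succ κ).ord ∧
      ∀ u : ℕ → κ.ord.ToType, @Ordinal.type κ.ord.ToType (relOf g (ι u)) (hwo u) < γ := by
  classical
  have hXcard : #κ.ord.ToType = κ := mk_ord_toType κ
  have hXinf : Infinite κ.ord.ToType := by
    rw [Cardinal.infinite_iff, hXcard]; exact huncount.le
  have hXne : Nonempty κ.ord.ToType := inferInstance
  have hordlim : Order.IsSuccLimit κ.ord := Cardinal.isSuccLimit_ord huncount.le
  -- cylinder lemma for seqTop
  have cyl : ∀ U : Set (ℕ → κ.ord.ToType), @IsOpen _ (seqTop κ.ord.ToType) U → ∀ u ∈ U,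
      ∃ n : ℕ, ∀ v : ℕ → κ.ord.ToType, (∀ i < n, v i = u i) → v ∈ U := by
    intro U hU
    change TopologicalSpace.GenerateOpen _ U at hU
    induction hU with
    | basic S hS =>
      intro u hu
      obtain ⟨n, s, rfl⟩ := hS
      exact ⟨n, fun v hv i hi => (hv i hi).trans (hu i hi)⟩
    | univ => exact fun u _ => ⟨0, fun _ _ => trivial⟩
    | inter S T _ _ ihS ihT =>
      intro u hu
      obtain ⟨n, hn⟩ := ihS u hu.1
      obtain ⟨m, hm⟩ := ihT u hu.2
      exact ⟨max n m, fun v hv =>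
        ⟨hn v fun i hi => hv i (hi.trans_le (le_max_left _ _)),
         hm v fun i hi => hv i (hi.trans_le (le_max_right _ _))⟩⟩
    | sUnion S hS ih =>
      rintro u ⟨T, hT, hu⟩
      obtain ⟨n, hn⟩ := ih T hT u hu
      exact ⟨n, fun v hv => ⟨T, hT, hn v hv⟩⟩
  -- continuity consequence
  have key : ∀ (u : ℕ → κ.ord.ToType) (c : κ.ord.ToType), c ∈ ι u →
      ∃ n : ℕ, ∀ v : ℕ → κ.ord.ToType, (∀ i < n, v i = u i) → c ∈ ι v := by
    intro u c hc
    have hidx : idx κ c < κ.ord := ((Ordinal.ToType.mk (o := κ.ord)).symm c).2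
    have hη : idx κ c + 1 < κ.ord := by
      rw [← Order.succ_eq_add_one]
      exact hordlim.succ_lt hidx
    have hSopen : @IsOpen _ (powTop κ)
        {y : Set κ.ord.ToType | {b | b ∈ y ∧ idx κ b < idx κ c + 1}
          = {b | b ∈ ι u ∧ idx κ b < idx κ c + 1}} := by
      apply TopologicalSpace.GenerateOpen.basic
      exact ⟨idx κ c + 1, {b | b ∈ ι u ∧ idx κ b < idx κ c + 1}, hη, fun b hb => hb.2, rfl⟩
    have hpre := @Continuous.isOpen_preimage _ _ (seqTop κ.ord.ToType) (powTop κ) ι hcont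
      _ hSopen
    have humem : u ∈ ι ⁻¹' {y : Set κ.ord.ToType | {b | b ∈ y ∧ idx κ b < idx κ c + 1}
        = {b | b ∈ ι u ∧ idx κ b < idx κ c + 1}} := rfl
    obtain ⟨n, hn⟩ := cyl _ hpre u humem
    refine ⟨n, fun v hv => ?_⟩
    have h1 : {b | b ∈ ι v ∧ idx κ b < idx κ c + 1}
        = {b | b ∈ ι u ∧ idx κ b < idx κ c + 1} := hn v hv
    have hc' : c ∈ {b | b ∈ ι u ∧ idx κ b < idx κ c + 1} := ⟨hc, lt_add_one _⟩
    rw [← h1] at hc'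
    exact hc'.1
  -- the step relation is well-founded
  have hwfstep : WellFounded (stepRel g ι) := by
    by_contra hns
    obtain ⟨x, hx⟩ : ∃ x, ¬Acc (stepRel g ι) x := by
      by_contra h
      push_neg at h
      exact hns ⟨h⟩
    have H : ∀ p : {a // ¬Acc (stepRel g ι) a}, ∃ q : {a // ¬Acc (stepRel g ι) a},
        stepRel g ι q.1 p.1 := by
      rintro ⟨p, hp⟩
      obtain ⟨w, hw1, hw2⟩ := exists_not_acc_lt_of_not_acc hp
      exact ⟨⟨w, hw1⟩, hw2⟩
    choose F hF using H
    set f : ℕ → {a // ¬Acc (stepRel g ι) a} := fun n => F^[n] ⟨x, hx⟩ with hfdef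
    have hstep : ∀ n : ℕ, stepRel g ι (f (n + 1)).1 (f n).1 := by
      intro n
      have : f (n + 1) = F (f n) := by
        rw [hfdef]
        simp [Function.iterate_succ_apply']
      rw [this]
      exact hF (f n)
    have hpre : ∀ n m : ℕ, n ≤ m → ((f n).1).1 <+: ((f m).1).1 := by
      intro n m h
      induction h with
      | refl => exact List.prefix_refl _
      | step _ ih => exact ih.trans (hstep _).1
    let u : ℕ → κ.ord.ToType := fun i =>
      if h : ∃ n, i < (((f n).1).1).length then (((f h.choose).1).1)[i]'(h.choose_spec)
      else Classical.arbitrary κ.ord.ToType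
    have hext : ∀ n, extList u (((f n).1).1) := by
      intro n i hi
      have h : ∃ m, i < (((f m).1).1).length := ⟨n, hi⟩
      show (if h : ∃ n, i < (((f n).1).1).length then (((f h.choose).1).1)[i]'(h.choose_spec)
        else Classical.arbitrary κ.ord.ToType) = (((f n).1).1)[i]
      rw [dif_pos h]
      rcases le_total h.choose n with hle | hle
      · exact List.IsPrefix.getElem (hpre _ _ hle) h.choose_spec
      · exact (List.IsPrefix.getElem (hpre _ _ hle) hi).symm
    have hdesc : ∀ n, relOf g (ι u) (((f (n + 1)).1).2) (((f n).1).2) :=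
      fun n => (hstep n).2 u (hext (n + 1))
    have hwf : WellFounded (relOf g (ι u)) := (hwo u).toIsWellFounded.wf
    obtain ⟨b, ⟨n, rfl⟩, hmin⟩ := hwf.has_min (Set.range fun n => ((f n).1).2)
      ⟨_, ⟨0, rfl⟩⟩
    exact hmin _ ⟨n + 1, rfl⟩ (hdesc n)
  letI instStep : IsWellFounded (List κ.ord.ToType × κ.ord.ToType) (stepRel g ι) := ⟨hwfstep⟩
  -- main rank comparison
  have main : ∀ (u : ℕ → κ.ord.ToType) (s : List κ.ord.ToType), extList u s →
      ∀ α : κ.ord.ToType,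
      @IsWellFounded.rank κ.ord.ToType (relOf g (ι u)) (hwo u).toIsWellFounded α
        ≤ IsWellFounded.rank (stepRel g ι) (s, α) := by
    intro u
    haveI := hwo u
    have hwf : WellFounded (relOf g (ι u)) := (hwo u).toIsWellFounded.wf
    intro s hs α
    induction α using hwf.induction generalizing s with
    | _ α IH =>
      rw [IsWellFounded.rank_eq]
      apply Ordinal.iSup_le
      rintro ⟨β, hβ⟩
      rw [Order.succ_le_iff]
      obtain ⟨n, hn⟩ := key u (g (β, α)) hβ
      have hstep : stepRel g ι (List.ofFn (fun i : Fin (max n s.length) => u i), β) (s, α) := by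
        constructor
        · exact prefix_ofFn_of_extList hs (le_max_right _ _)
        · intro v hv
          have hv' : extList v (List.ofFn (fun i : Fin (max n s.length) => u i)) := hv
          apply hn
          intro i hi
          have hlen : i < (List.ofFn (fun i : Fin (max n s.length) => u i)).length := by
            rw [List.length_ofFn]
            exact hi.trans_le (le_max_left _ _)
          have h2 := hv' i hlen
          rw [List.getElem_ofFn] at h2
          exact h2
      calc IsWellFounded.rank (relOf g (ι u)) β
          ≤ IsWellFounded.rank (stepRel g ι) (List.ofFn (fun i : Fin (max n s.length) => u i), β) :=
            IH β hβ _ (extList_ofFn u _)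
        _ < IsWellFounded.rank (stepRel g ι) (s, α) := IsWellFounded.rank_lt_of_rel hstep
  -- cardinality bookkeeping
  have hcard : #(List κ.ord.ToType × κ.ord.ToType) ≤ κ := by
    rw [Cardinal.mk_prod, Cardinal.lift_id, Cardinal.lift_id, Cardinal.mk_list_eq_mk, hXcard,
      Cardinal.mul_eq_self huncount.le]
  have hreg : (Order.succ κ).IsRegular := Cardinal.isRegular_succ huncount.le
  have hcof2 : #(List κ.ord.ToType × κ.ord.ToType) < ((Order.succ κ).ord).cof := by
    rw [hreg.cof_eq]
    exact hcard.trans_lt (Order.lt_succ κ)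
  have hlim2 : Order.IsSuccLimit ((Order.succ κ).ord) :=
    Cardinal.isSuccLimit_ord (huncount.le.trans (Order.le_succ κ))
  -- every rank is below (succ κ).ord
  have hranklt : ∀ p : List κ.ord.ToType × κ.ord.ToType,
      IsWellFounded.rank (stepRel g ι) p < (Order.succ κ).ord := by
    intro p
    induction p using hwfstep.induction with
    | _ p IH =>
      rw [IsWellFounded.rank_eq]
      apply Ordinal.iSup_lt_ord
      · exact (Cardinal.mk_subtype_le _).trans_lt hcof2
      · rintro ⟨q, hq⟩
        exact hlim2.succ_lt (IH q hq)
  have hσlt : (⨆ p : List κ.ord.ToType × κ.ord.ToType, IsWellFounded.rank (stepRel g ι) p)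
      < (Order.succ κ).ord := Ordinal.iSup_lt_ord hcof2 hranklt
  set σ : Ordinal.{u} := ⨆ p : List κ.ord.ToType × κ.ord.ToType,
    IsWellFounded.rank (stepRel g ι) p with hσdef
  refine ⟨σ + 2, ?_, ?_⟩
  · have h1 : σ + 2 = Order.succ (Order.succ σ) := by
      rw [← Ordinal.add_one_eq_succ, ← Ordinal.add_one_eq_succ, add_assoc, one_add_one_eq_two]
    rw [h1]
    exact hlim2.succ_lt (hlim2.succ_lt hσlt)
  · intro u
    haveI := hwo u
    have htype : Ordinal.type (relOf g (ι u)) ≤ σ + 1 := by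
      by_contra hlt
      push_neg at hlt
      obtain ⟨a, ha⟩ := Ordinal.typein_surj (relOf g (ι u)) hlt
      have h2 : IsWellFounded.rank (relOf g (ι u)) a = σ + 1 := by
        rw [IsWellFounded.rank_eq_typein]
        exact ha
      have h3 : IsWellFounded.rank (relOf g (ι u)) a ≤ σ := by
        refine le_trans (main u [] (fun i hi => absurd hi (by simp)) a) ?_
        exact Ordinal.le_iSup _ (([] : List κ.ord.ToType), a)
      rw [h2] at h3
      exact absurd h3 (by simp)
    calc Ordinal.type (relOf g (ι u)) ≤ σ + 1 := htype
      _ < σ + 2 := by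
        rw [add_lt_add_iff_left]
        exact one_lt_two
end

section
/- Let κ be a singular strong limit cardinal of countable cofinality, fix a bijection g : κ × κ → κ, and let D ⊆ WO_κ be a set on which the map z ↦ otp(z) is injective (distinct elements of D code well-orderings of distinct order types). Then there is no continuous injection ι : ᵚκ → 𝒫(κ) with ran(ι) ⊆ D. -/
universe u

open Cardinal

namespace Statement5

variable {α : Type u}

/-- Given a bijection `g : κ × κ ≃ κ` and a subset `z ⊆ κ`, the binary relation `⊲_z` on `κ`
given by `a ⊲_z b ↔ g(a, b) ∈ z`. -/
def relOf (g : α × α ≃ α) (z : Set α) : α → α → Prop :=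
  fun a b => g (a, b) ∈ z

/-- The canonical ordinal index (below `κ.ord`) of an element of `κ.ord.ToType`. -/
noncomputable def idx (κ : Cardinal.{u}) (b : κ.ord.ToType) : Ordinal.{u} :=
  ((Ordinal.ToType.mk (o := κ.ord)).symm b : Set.Iio κ.ord)

/-- The topology on `ᵚκ` whose basic open sets consist of all functions extending a given
finite sequence. -/
def seqTop (α : Type u) : TopologicalSpace (ℕ → α) :=
  TopologicalSpace.generateFrom
    {S | ∃ (n : ℕ) (s : ℕ → α), S = {f | ∀ i < n, f i = s i}}

/-- The topology on `𝒫(κ)` whose basic open sets consist of all subsets of `κ` whose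
intersection with a given ordinal `η < κ` equals a fixed subset of `η`. -/
noncomputable def powTop (κ : Cardinal.{u}) : TopologicalSpace (Set κ.ord.ToType) :=
  TopologicalSpace.generateFrom
    {S | ∃ (η : Ordinal.{u}) (a : Set κ.ord.ToType), η < κ.ord ∧ (∀ b ∈ a, idx κ b < η) ∧
      S = {y | {b | b ∈ y ∧ idx κ b < η} = a}}

end Statement5

open Statement5

namespace S5Aux

open Cardinal Ordinal Statement5

/-- The basic cylinder determined by a finite list. -/
def Cyl {α : Type u} (s : List α) : Set (ℕ → α) :=
  {f | ∀ (i : ℕ) (h : i < s.length), f i = s[i]}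

theorem prefix_of_eq {α : Type u} {s t : List α} (h : s.length ≤ t.length)
    (he : ∀ (i : ℕ) (h1 : i < s.length), s[i] = t[i]'(lt_of_lt_of_le h1 h)) : s <+: t := by
  rw [List.prefix_iff_eq_take]
  apply List.ext_getElem (by simp [Nat.min_eq_left h])
  intro i h1 h2
  rw [List.getElem_take]
  exact he i h1

/-- Every open set of `seqTop` containing `f` contains a basic cylinder around `f`. -/
theorem cyl_of_isOpen {α : Type u} {U : Set (ℕ → α)} (hU : @IsOpen _ (seqTop α) U)
    {f : ℕ → α} (hf : f ∈ U) : ∃ n : ℕ, ∀ f' : ℕ → α, (∀ i < n, f' i = f i) → f' ∈ U := by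
  have hU' : TopologicalSpace.GenerateOpen
      {S | ∃ (n : ℕ) (s : ℕ → α), S = {f | ∀ i < n, f i = s i}} U := hU
  clear hU
  revert hf
  induction hU' with
  | basic S hS =>
    intro hf
    obtain ⟨n, s, rfl⟩ := hS
    exact ⟨n, fun f' h i hi => (h i hi).trans (hf i hi)⟩
  | univ => exact fun _ => ⟨0, fun _ _ => trivial⟩
  | inter U V _ _ ihU ihV =>
    intro hf
    obtain ⟨n, hn⟩ := ihU hf.1
    obtain ⟨m, hm⟩ := ihV hf.2
    exact ⟨max n m, fun f' h => ⟨hn f' fun i hi => h i (lt_of_lt_of_le hi (le_max_left _ _)),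
      hm f' fun i hi => h i (lt_of_lt_of_le hi (le_max_right _ _))⟩⟩
  | sUnion S _ ih =>
    rintro ⟨t, ht, hft⟩
    obtain ⟨n, hn⟩ := ih t ht hft
    exact ⟨n, fun f' h => ⟨t, ht, hn f' h⟩⟩

/-- Continuity implies local decision of membership of a fixed point. -/
theorem decide_mem {κ : Cardinal.{u}} (hκ : ℵ₀ ≤ κ)
    {ι : (ℕ → κ.ord.ToType) → Set κ.ord.ToType}
    (hcont : @Continuous _ _ (seqTop κ.ord.ToType) (powTop κ) ι)
    (f : ℕ → κ.ord.ToType) (c : κ.ord.ToType) (n₀ : ℕ) :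
    ∃ n, n₀ ≤ n ∧ ∀ f' : ℕ → κ.ord.ToType,
      (∀ i < n, f' i = f i) → (c ∈ ι f' ↔ c ∈ ι f) := by
  have hcη : idx κ c < Order.succ (idx κ c) := Order.lt_succ _
  have hη : Order.succ (idx κ c) < κ.ord :=
    (Cardinal.isSuccLimit_ord hκ).succ_lt (((Ordinal.ToType.mk (o := κ.ord)).symm c).2)
  have hSopen : @IsOpen _ (powTop κ) {y | {b | b ∈ y ∧ idx κ b < Order.succ (idx κ c)}
        = {b | b ∈ ι f ∧ idx κ b < Order.succ (idx κ c)}} :=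
    TopologicalSpace.GenerateOpen.basic _
      ⟨Order.succ (idx κ c), {b | b ∈ ι f ∧ idx κ b < Order.succ (idx κ c)}, hη,
        fun b hb => hb.2, rfl⟩
  have hUopen : @IsOpen _ (seqTop κ.ord.ToType) (ι ⁻¹' {y | {b | b ∈ y ∧ idx κ b < Order.succ (idx κ c)}
        = {b | b ∈ ι f ∧ idx κ b < Order.succ (idx κ c)}}) :=
    @Continuous.isOpen_preimage _ _ (seqTop κ.ord.ToType) (powTop κ) ι hcont _ hSopen
  have hfU : f ∈ ι ⁻¹' {y | {b | b ∈ y ∧ idx κ b < Order.succ (idx κ c)}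
      = {b | b ∈ ι f ∧ idx κ b < Order.succ (idx κ c)}} := rfl
  obtain ⟨n₁, hn₁⟩ := cyl_of_isOpen hUopen hfU
  refine ⟨max n₀ n₁, le_max_left _ _, fun f' h => ?_⟩
  have hf' := hn₁ f' (fun i hi => h i (lt_of_lt_of_le hi (le_max_right _ _)))
  have hx := Set.ext_iff.1 hf' c
  simpa [hcη] using hx

section Main

variable {κ : Cardinal.{u}} {g : κ.ord.ToType × κ.ord.ToType ≃ κ.ord.ToType}
variable {ι : (ℕ → κ.ord.ToType) → Set κ.ord.ToType}

/-- Order type of the coded well-order. -/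
noncomputable def otp (g : κ.ord.ToType × κ.ord.ToType ≃ κ.ord.ToType)
    (ι : (ℕ → κ.ord.ToType) → Set κ.ord.ToType)
    (hwo : ∀ f, IsWellOrder κ.ord.ToType (relOf g (ι f))) (f : ℕ → κ.ord.ToType) :
    Ordinal.{u} :=
  @Ordinal.type _ (relOf g (ι f)) (hwo f)

/-- Rank of a point in the coded well-order. -/
noncomputable def rk (g : κ.ord.ToType × κ.ord.ToType ≃ κ.ord.ToType)
    (ι : (ℕ → κ.ord.ToType) → Set κ.ord.ToType)
    (hwo : ∀ f, IsWellOrder κ.ord.ToType (relOf g (ι f))) (f : ℕ → κ.ord.ToType)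
    (b : κ.ord.ToType) : Ordinal.{u} :=
  @Ordinal.typein _ (relOf g (ι f)) (hwo f) b

/-- `Big s b` : the ranks of `b` in the codes of elements of the cylinder `[s]` are
unbounded in `κ⁺`. -/
def Big (g : κ.ord.ToType × κ.ord.ToType ≃ κ.ord.ToType)
    (ι : (ℕ → κ.ord.ToType) → Set κ.ord.ToType)
    (hwo : ∀ f, IsWellOrder κ.ord.ToType (relOf g (ι f)))
    (s : List κ.ord.ToType) (b : κ.ord.ToType) : Prop :=
  ∀ γ < (Order.succ κ).ord, ∃ f ∈ Cyl s, γ ≤ rk g ι hwo f b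

variable (hwo : ∀ f, IsWellOrder κ.ord.ToType (relOf g (ι f)))

theorem otp_lt (hκ : ℵ₀ ≤ κ) (f : ℕ → κ.ord.ToType) :
    otp g ι hwo f < (Order.succ κ).ord := by
  rw [Cardinal.lt_ord, Order.lt_succ_iff, otp, Ordinal.card_type, mk_ord_toType]

theorem rk_lt_otp (f : ℕ → κ.ord.ToType) (b : κ.ord.ToType) :
    rk g ι hwo f b < otp g ι hwo f :=
  @Ordinal.typein_lt_type _ (relOf g (ι f)) (hwo f) b

theorem base (hκ : ℵ₀ < κ)
    (hunb : ∀ γ < (Order.succ κ).ord, ∃ f, γ < otp g ι hwo f) :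
    ∃ b, Big g ι hwo [] b := by
  by_contra hno
  push_neg at hno
  have hno' : ∀ b : κ.ord.ToType, ∃ γ, γ < (Order.succ κ).ord ∧
      ∀ f, rk g ι hwo f b < γ := by
    intro b
    have := hno b
    simp only [Big] at this
    push_neg at this
    obtain ⟨γ, h1, h2⟩ := this
    exact ⟨γ, h1, fun f => h2 f (fun i hi => absurd hi (Nat.not_lt_zero i))⟩
  choose G hG1 hG2 using hno'
  have hΓ : iSup G < (Order.succ κ).ord :=
    Cardinal.iSup_lt_ord_of_isRegular (Cardinal.isRegular_succ hκ.le)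
      (by rw [mk_ord_toType]; exact Order.lt_succ κ) hG1
  obtain ⟨f, hf⟩ := hunb _ hΓ
  obtain ⟨b, hb⟩ := @Ordinal.typein_surj _ (relOf g (ι f)) (hwo f) _ hf
  have h1 : rk g ι hwo f b < G b := hG2 b f
  have h2 : G b ≤ iSup G := Ordinal.le_iSup G b
  rw [show rk g ι hwo f b = iSup G from hb] at h1
  exact absurd (h1.trans_le h2) (lt_irrefl _)

theorem step (hκ : ℵ₀ < κ)
    (hcont : @Continuous _ _ (seqTop κ.ord.ToType) (powTop κ) ι)
    (s : List κ.ord.ToType) (b : κ.ord.ToType) (hbig : Big g ι hwo s b) :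
    ∃ t b', s <+: t ∧ s.length < t.length ∧
      (∀ f ∈ Cyl t, relOf g (ι f) b' b) ∧ Big g ι hwo t b' := by
  by_contra hno
  have hno' : ∀ p : List κ.ord.ToType × κ.ord.ToType, ∃ γ, γ < (Order.succ κ).ord ∧
      ((s <+: p.1 ∧ s.length < p.1.length ∧ ∀ f ∈ Cyl p.1, relOf g (ι f) p.2 b) →
        ∀ f ∈ Cyl p.1, rk g ι hwo f p.2 < γ) := by
    intro p
    by_cases hp : s <+: p.1 ∧ s.length < p.1.length ∧ ∀ f ∈ Cyl p.1, relOf g (ι f) p.2 b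
    · have hnb : ¬ Big g ι hwo p.1 p.2 :=
        fun h => hno ⟨p.1, p.2, hp.1, hp.2.1, hp.2.2, h⟩
      simp only [Big] at hnb
      push_neg at hnb
      obtain ⟨γ, h1, h2⟩ := hnb
      exact ⟨γ, h1, fun _ => h2⟩
    · refine ⟨0, ?_, fun h => absurd h hp⟩
      rw [Cardinal.lt_ord]
      simpa using lt_of_le_of_lt (zero_le κ) (Order.lt_succ κ)
  choose G hG1 hG2 using hno'
  have hcard : #(List κ.ord.ToType × κ.ord.ToType) < Order.succ κ := by
    haveI : Infinite κ.ord.ToType := by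
      rw [Cardinal.infinite_iff, mk_ord_toType]; exact hκ.le
    have h1 : #(List κ.ord.ToType × κ.ord.ToType) = κ := by
      rw [Cardinal.mk_prod, Cardinal.mk_list_eq_mk, mk_ord_toType]
      simp [Cardinal.mul_eq_self hκ.le]
    rw [h1]; exact Order.lt_succ κ
  have hΓ : iSup G < (Order.succ κ).ord :=
    Cardinal.iSup_lt_ord_of_isRegular (Cardinal.isRegular_succ hκ.le) hcard hG1
  have hΓ1 : Order.succ (iSup G) < (Order.succ κ).ord :=
    (Cardinal.isSuccLimit_ord (hκ.le.trans (Order.le_succ κ))).succ_lt hΓ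
  obtain ⟨f, hfs, hfr⟩ := hbig _ hΓ1
  have hlt : iSup G < rk g ι hwo f b := lt_of_lt_of_le (Order.lt_succ _) hfr
  have hlt2 : iSup G < otp g ι hwo f := hlt.trans (rk_lt_otp hwo f b)
  obtain ⟨b', hb'⟩ := @Ordinal.typein_surj _ (relOf g (ι f)) (hwo f) _ hlt2
  have hb'b : relOf g (ι f) b' b := by
    refine (@Ordinal.typein_lt_typein _ (relOf g (ι f)) (hwo f) b' b).1 ?_
    show rk g ι hwo f b' < rk g ι hwo f b
    rw [show rk g ι hwo f b' = iSup G from hb']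
    exact hlt
  obtain ⟨n, hn0, hdec⟩ := decide_mem hκ.le hcont f (g (b', b)) (s.length + 1)
  have hsn : s.length ≤ n := le_of_lt hn0
  refine absurd ((hG2 (List.ofFn fun i : Fin n => f i, b')
      ⟨?_, ?_, ?_⟩ f ?_).trans_le (Ordinal.le_iSup G _)) ?_
  · refine prefix_of_eq (by simpa using hsn) ?_
    intro i h1
    rw [List.getElem_ofFn]
    exact (hfs i h1).symm
  · simpa using hn0
  · intro f' hf'
    have hagree : ∀ i < n, f' i = f i := by
      intro i hi
      have := hf' i (by simpa using hi)
      rwa [List.getElem_ofFn] at this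
    exact (hdec f' hagree).2 hb'b
  · intro i h
    rw [List.getElem_ofFn]
  · rw [show rk g ι hwo f b' = iSup G from hb']
    exact lt_irrefl _

theorem main (hκ : ℵ₀ < κ) (hcof : κ.ord.cof = ℵ₀)
    (hcont : @Continuous _ _ (seqTop κ.ord.ToType) (powTop κ) ι)
    (hinj : Function.Injective ι)
    (hotpinj' : ∀ f f', otp g ι hwo f = otp g ι hwo f' → ι f = ι f') : False := by
  -- cardinality of the domain exceeds κ
  have hpow : κ < #(ℕ → κ.ord.ToType) := by
    have h1 : κ < κ ^ (ℵ₀ : Cardinal.{u}) := by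
      have := Cardinal.lt_power_cof (c := κ) hκ.le
      rwa [hcof] at this
    have h2 : #(ℕ → κ.ord.ToType) = κ ^ (ℵ₀ : Cardinal.{u}) := by
      have e : (ℕ → κ.ord.ToType) ≃ (ULift.{u} ℕ → κ.ord.ToType) :=
        Equiv.arrowCongr Equiv.ulift.symm (Equiv.refl _)
      rw [Cardinal.mk_congr e, ← Cardinal.power_def, mk_ord_toType, Cardinal.mk_uLift,
        Cardinal.mk_nat, Cardinal.lift_aleph0]
    rwa [h2]
  by_cases hbdd : ∃ γ < (Order.succ κ).ord, ∀ f, otp g ι hwo f ≤ γ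
  · -- bounded case: the domain injects into a set of size ≤ κ
    obtain ⟨γ, hγ, hbound⟩ := hbdd
    have hinj2 : Function.Injective
        (fun f => Ordinal.ToType.mk (o := Order.succ γ)
          (⟨otp g ι hwo f, lt_of_le_of_lt (hbound f) (Order.lt_succ γ)⟩ :
            Set.Iio (Order.succ γ))) := by
      intro f f' h
      have h' := (Ordinal.ToType.mk (o := Order.succ γ)).injective h
      exact hinj (hotpinj' f f' (congrArg Subtype.val h'))
    have hle := Cardinal.mk_le_of_injective hinj2
    have hcard : #(Order.succ γ).ToType ≤ κ := by
      rw [Cardinal.mk_toType]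
      have h1 : Order.succ γ < (Order.succ κ).ord :=
        (Cardinal.isSuccLimit_ord (hκ.le.trans (Order.le_succ κ))).succ_lt hγ
      exact Order.lt_succ_iff.1 (Cardinal.lt_ord.1 h1)
    exact absurd (hpow.trans_le (hle.trans hcard)) (lt_irrefl κ)
  · -- unbounded case: fusion argument
    push_neg at hbdd
    have hunb : ∀ γ < (Order.succ κ).ord, ∃ f, γ < otp g ι hwo f := hbdd
    obtain ⟨b₀, hb₀⟩ := base hwo hκ hunb
    have hstep : ∀ p : {p : List κ.ord.ToType × κ.ord.ToType // Big g ι hwo p.1 p.2},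
        ∃ q : {p : List κ.ord.ToType × κ.ord.ToType // Big g ι hwo p.1 p.2},
          p.1.1 <+: q.1.1 ∧ p.1.1.length < q.1.1.length ∧
            ∀ f ∈ Cyl q.1.1, relOf g (ι f) q.1.2 p.1.2 := by
      rintro ⟨⟨s, b⟩, hbig⟩
      obtain ⟨t, b', h1, h2, h3, h4⟩ := step hwo hκ hcont s b hbig
      exact ⟨⟨(t, b'), h4⟩, h1, h2, h3⟩
    choose Φ hΦ1 hΦ2 hΦ3 using hstep
    set p₀ : {p : List κ.ord.ToType × κ.ord.ToType // Big g ι hwo p.1 p.2} :=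
      ⟨([], b₀), hb₀⟩ with hp₀
    set seq : ℕ → {p : List κ.ord.ToType × κ.ord.ToType // Big g ι hwo p.1 p.2} :=
      fun n => Φ^[n] p₀ with hseq
    have hseq_succ : ∀ n, seq (n + 1) = Φ (seq n) := fun n =>
      Function.iterate_succ_apply' Φ n p₀
    have hlen : ∀ n, n ≤ (seq n).1.1.length := by
      intro n
      induction n with
      | zero => exact Nat.zero_le _
      | succ n ih =>
        have := hΦ2 (seq n)
        rw [← hseq_succ n] at this
        omega
    have hchain : ∀ m n, m ≤ n → (seq m).1.1 <+: (seq n).1.1 := by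
      intro m n h
      induction n with
      | zero => rw [Nat.le_zero.1 h]
      | succ n ih =>
        rcases Nat.lt_or_ge m (n + 1) with h' | h'
        · have h1 := ih (Nat.lt_succ_iff.1 h')
          have h2 := hΦ1 (seq n)
          rw [← hseq_succ n] at h2
          exact h1.trans h2
        · rw [Nat.le_antisymm h h']
    have hlt : ∀ i : ℕ, i < (seq (i + 1)).1.1.length := fun i =>
      lt_of_lt_of_le (Nat.lt_succ_self i) (hlen (i + 1))
    set fstar : ℕ → κ.ord.ToType := fun i => (seq (i + 1)).1.1[i]'(hlt i) with hfstar
    have hstar : ∀ n, fstar ∈ Cyl (seq n).1.1 := by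
      intro n i hi
      show (seq (i + 1)).1.1[i]'(hlt i) = (seq n).1.1[i]'hi
      rcases le_total (i + 1) n with h | h
      · exact (hchain (i + 1) n h).getElem (hlt i)
      · exact ((hchain n (i + 1) h).getElem hi).symm
    have hdesc : ∀ n, relOf g (ι fstar) ((seq (n + 1)).1.2) ((seq n).1.2) := by
      intro n
      have h1 := hΦ3 (seq n) fstar
      rw [← hseq_succ n] at h1
      exact h1 (hstar (n + 1))
    obtain ⟨a, ⟨m, rfl⟩, hmin⟩ := (hwo fstar).toIsWellFounded.wf.has_min
      (Set.range fun n => (seq n).1.2) ⟨(seq 0).1.2, ⟨0, rfl⟩⟩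
    exact hmin ((seq (m + 1)).1.2) ⟨m + 1, rfl⟩ (hdesc m)

end Main

end S5Aux

/-- Let `κ` be a singular strong limit cardinal of countable cofinality,
represented by the type `κ.ord.ToType`, fix a bijection `g : κ × κ ≃ κ`, and let
`D ⊆ WO_κ` be a set of codes of well-orderings of `κ` on which the order type map is
injective. Then there is no continuous injection `ι : ᵚκ → 𝒫(κ)` with `ran(ι) ⊆ D`. -/
theorem statement5 (κ : Cardinal.{u}) (huncount : ℵ₀ < κ)
    (hstronglimit : ∀ μ < κ, (2 : Cardinal.{u}) ^ μ < κ)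
    (hcof : κ.ord.cof = ℵ₀)
    (g : κ.ord.ToType × κ.ord.ToType ≃ κ.ord.ToType)
    (D : Set (Set κ.ord.ToType))
    (hD : ∀ z ∈ D, IsWellOrder κ.ord.ToType (relOf g z))
    (hotpinj : ∀ z₁, ∀ h₁ : z₁ ∈ D, ∀ z₂, ∀ h₂ : z₂ ∈ D,
      @Ordinal.type κ.ord.ToType (relOf g z₁) (hD z₁ h₁) =
        @Ordinal.type κ.ord.ToType (relOf g z₂) (hD z₂ h₂) → z₁ = z₂) :
    ¬ ∃ ι : (ℕ → κ.ord.ToType) → Set κ.ord.ToType,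
        @Continuous _ _ (seqTop κ.ord.ToType) (powTop κ) ι ∧
        Function.Injective ι ∧ Set.range ι ⊆ D := by
  rintro ⟨ι, hcont, hinj, hsub⟩
  have hwo : ∀ f : ℕ → κ.ord.ToType, IsWellOrder κ.ord.ToType (relOf g (ι f)) :=
    fun f => hD (ι f) (hsub (Set.mem_range_self f))
  refine S5Aux.main hwo huncount hcof hcont hinj ?_
  intro f f' h
  exact hotpinj (ι f) (hsub (Set.mem_range_self f)) (ι f') (hsub (Set.mem_range_self f')) h
end

section
/- Let μ be an infinite regular cardinal, let κ be a cardinal of cofinality μ, and let ⟨κ_s : s ∈ ^{<μ}κ⟩ be a system of ordinals below κ such that (i) κ_s < κ_t whenever s ⊊ t, and (ii) for every c ∈ ^μκ, the sequence ⟨κ_{c↾ξ} : ξ < μ⟩ is cofinal in κ. Suppose ι : ^μκ → 𝒫(κ) is a function such that (iii) for all c, d ∈ ^μκ and ξ < μ, if c↾ξ = d↾ξ then ι(c) ∩ κ_{c↾ξ} = ι(d) ∩ κ_{c↾ξ}, and (iv) for all c, d ∈ ^μκ and ξ < μ, if c↾ξ = d↾ξ and c(ξ) ≠ d(ξ), then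 ι(c) ∩ ρ ≠ ι(d) ∩ ρ, where ρ = min(κ_{c↾(ξ+1)}, κ_{d↾(ξ+1)}). Then ι is a perfect embedding: it is injective and a homeomorphism onto its range. -/
universe u

open Cardinal

namespace Statement6

/-- The canonical ordinal index (below `ν.ord`) of an element of `ν.ord.toType`. -/
noncomputable def idx (ν : Cardinal.{u}) (b : ν.ord.ToType) : Ordinal.{u} :=
  ((Ordinal.ToType.mk (o := ν.ord)).symm b : Set.Iio ν.ord)

/-- The topology on `^μκ` whose basic open sets consist of all functions extending a given
function `s : ξ → κ` with `ξ < μ`. -/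
noncomputable def funTop (μ κ : Cardinal.{u}) :
    TopologicalSpace (μ.ord.ToType → κ.ord.ToType) :=
  TopologicalSpace.generateFrom
    {S | ∃ (ξ : Ordinal.{u}) (s : μ.ord.ToType → κ.ord.ToType), ξ < μ.ord ∧
      S = {f | ∀ η : μ.ord.ToType, idx μ η < ξ → f η = s η}}

/-- The topology on `𝒫(κ)` whose basic open sets consist of all subsets of `κ` whose
intersection with a given ordinal `η < κ` equals a fixed subset of `η`. -/
noncomputable def powTop (κ : Cardinal.{u}) : TopologicalSpace (Set κ.ord.ToType) :=
  TopologicalSpace.generateFrom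
    {S | ∃ (η : Ordinal.{u}) (a : Set κ.ord.ToType), η < κ.ord ∧ (∀ b ∈ a, idx κ b < η) ∧
      S = {y | {b | b ∈ y ∧ idx κ b < η} = a}}

end Statement6

open Statement6


section Aux

/-- A set is open in a generated topology if every point has a generating set around it
inside the set. -/
theorem aux_isOpen_generateFrom_of_forall {α : Type*} {g : Set (Set α)} {U : Set α}
    (h : ∀ c ∈ U, ∃ B ∈ g, c ∈ B ∧ B ⊆ U) :
    @IsOpen _ (TopologicalSpace.generateFrom g) U := by
  letI := TopologicalSpace.generateFrom g
  have hU : U = ⋃₀ {B | B ∈ g ∧ B ⊆ U} := by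
    apply Set.Subset.antisymm
    · intro c hc
      obtain ⟨B, hBg, hcB, hBU⟩ := h c hc
      exact ⟨B, ⟨hBg, hBU⟩, hcB⟩
    · intro c ⟨B, ⟨_, hBU⟩, hcB⟩
      exact hBU hcB
  rw [hU]
  exact isOpen_sUnion fun B hB => TopologicalSpace.isOpen_generateFrom_of_mem hB.1

end Aux

/-- Let `μ` be an infinite regular cardinal, let `κ` be a cardinal of
cofinality `μ`, both represented by their canonical types `μ.ord.toType` and `κ.ord.toType`,
and let `⟨κ_s : s ∈ ^{<μ}κ⟩` be a system of ordinals below `κ`, presented by a function `F`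
on pairs `(c, ξ)` (with value `κ_{c↾ξ}`) that depends only on the restriction `c↾ξ`, such that
(i) `κ_s < κ_t` whenever `s ⊊ t`, and (ii) for every `c ∈ ^μκ` the sequence
`⟨κ_{c↾ξ} : ξ < μ⟩` is cofinal in `κ`. Suppose `ι : ^μκ → 𝒫(κ)` is a function such that
(iii) if `c↾ξ = d↾ξ` then `ι(c) ∩ κ_{c↾ξ} = ι(d) ∩ κ_{c↾ξ}`, and (iv) if `c↾ξ = d↾ξ` and
`c(ξ) ≠ d(ξ)` then `ι(c) ∩ ρ ≠ ι(d) ∩ ρ` where `ρ = min(κ_{c↾(ξ+1)}, κ_{d↾(ξ+1)})`.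
Then `ι` is a perfect embedding: it is injective and a homeomorphism onto its range. -/
theorem statement6 (μ κ : Cardinal.{u}) (hμ : μ.IsRegular) (hcof : κ.ord.cof = μ)
    (F : (μ.ord.ToType → κ.ord.ToType) → Ordinal.{u} → Ordinal.{u})
    -- `F c ξ` represents `κ_{c↾ξ}`: it only depends on the restriction of `c` to `ξ`
    (hFresp : ∀ c d : μ.ord.ToType → κ.ord.ToType, ∀ ξ : Ordinal.{u},
      (∀ η : μ.ord.ToType, idx μ η < ξ → c η = d η) → F c ξ = F d ξ)
    -- the `κ_s` are ordinals below `κ`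
    (hFlt : ∀ c : μ.ord.ToType → κ.ord.ToType, ∀ ξ < μ.ord, F c ξ < κ.ord)
    -- (i) `κ_s < κ_t` whenever `s ⊊ t`
    (hFmono : ∀ c : μ.ord.ToType → κ.ord.ToType, ∀ ξ ζ : Ordinal.{u},
      ξ < ζ → ζ < μ.ord → F c ξ < F c ζ)
    -- (ii) for every `c ∈ ^μκ`, the sequence `⟨κ_{c↾ξ} : ξ < μ⟩` is cofinal in `κ`
    (hFcof : ∀ c : μ.ord.ToType → κ.ord.ToType, ∀ o < κ.ord, ∃ ξ < μ.ord, o < F c ξ)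
    (ι : (μ.ord.ToType → κ.ord.ToType) → Set κ.ord.ToType)
    -- (iii)
    (hsame : ∀ c d : μ.ord.ToType → κ.ord.ToType, ∀ ξ < μ.ord,
      (∀ η : μ.ord.ToType, idx μ η < ξ → c η = d η) →
      {b | b ∈ ι c ∧ idx κ b < F c ξ} = {b | b ∈ ι d ∧ idx κ b < F c ξ})
    -- (iv)
    (hsplit : ∀ c d : μ.ord.ToType → κ.ord.ToType, ∀ ξ : μ.ord.ToType,
      (∀ η : μ.ord.ToType, η < ξ → c η = d η) → c ξ ≠ d ξ →
      {b | b ∈ ι c ∧ idx κ b < min (F c (idx μ ξ + 1)) (F d (idx μ ξ + 1))} ≠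
        {b | b ∈ ι d ∧ idx κ b < min (F c (idx μ ξ + 1)) (F d (idx μ ξ + 1))}) :
    Function.Injective ι ∧
      @Continuous _ _ (funTop μ κ) (powTop κ) ι ∧
      ∀ O : Set (μ.ord.ToType → κ.ord.ToType), @IsOpen _ (funTop μ κ) O →
        ∃ V : Set (Set κ.ord.ToType), @IsOpen _ (powTop κ) V ∧
          ι '' O = V ∩ Set.range ι := by
  classical
  -- basic facts about `idx`
  have idx_lt : ∀ (ν : Cardinal.{u}) (b : ν.ord.ToType), idx ν b < ν.ord :=
    fun ν b => ((Ordinal.ToType.mk (o := ν.ord)).symm b).2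
  have idx_mono : ∀ (ν : Cardinal.{u}) (a b : ν.ord.ToType), a < b → idx ν a < idx ν b := by
    intro ν a b h
    exact_mod_cast (Ordinal.ToType.mk (o := ν.ord)).symm.lt_iff_lt.mpr h
  have hμ0 : (0 : Ordinal.{u}) < μ.ord := by
    rw [Cardinal.lt_ord]; simpa using hμ.pos
  -- the generating families
  set gfun : Set (Set (μ.ord.ToType → κ.ord.ToType)) :=
    {S | ∃ (ξ : Ordinal.{u}) (s : μ.ord.ToType → κ.ord.ToType), ξ < μ.ord ∧
      S = {f | ∀ η : μ.ord.ToType, idx μ η < ξ → f η = s η}} with hgfun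
  set gpow : Set (Set (Set κ.ord.ToType)) :=
    {S | ∃ (η : Ordinal.{u}) (a : Set κ.ord.ToType), η < κ.ord ∧ (∀ b ∈ a, idx κ b < η) ∧
      S = {y | {b | b ∈ y ∧ idx κ b < η} = a}} with hgpow
  have hfunTop : funTop μ κ = TopologicalSpace.generateFrom gfun := rfl
  have hpowTop : powTop κ = TopologicalSpace.generateFrom gpow := rfl
  -- the basic neighborhoods in `funTop`
  set N : (μ.ord.ToType → κ.ord.ToType) → Ordinal.{u} → Set (μ.ord.ToType → κ.ord.ToType) :=
    fun c ξ => {f | ∀ η : μ.ord.ToType, idx μ η < ξ → f η = c η} with hN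
  have hNmem : ∀ c ξ, ξ < μ.ord → N c ξ ∈ gfun := fun c ξ hξ => ⟨ξ, c, hξ, rfl⟩
  have hNself : ∀ c ξ, c ∈ N c ξ := fun c ξ η _ => rfl
  -- key consequence of `hsplit`: agreement of images below `F c ξ` forces agreement below `ξ`
  have splitlem : ∀ c d : μ.ord.ToType → κ.ord.ToType, ∀ ξ : Ordinal.{u}, ξ < μ.ord →
      ({b | b ∈ ι c ∧ idx κ b < F c ξ} = {b | b ∈ ι d ∧ idx κ b < F c ξ}) →
      d ∈ N c ξ := by
    intro c d ξ hξ heq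
    by_contra h
    have h' : ∃ ζ : μ.ord.ToType, idx μ ζ < ξ ∧ c ζ ≠ d ζ := by
      simp only [hN, Set.mem_setOf_eq, not_forall] at h
      obtain ⟨ζ, hζ, hne⟩ := h
      exact ⟨ζ, hζ, fun hc => hne (hc.symm)⟩
    obtain ⟨ζ, ⟨hζξ, hζne⟩, hmin⟩ :=
      (wellFounded_lt (α := μ.ord.ToType)).has_min
        {ζ | idx μ ζ < ξ ∧ c ζ ≠ d ζ} (by obtain ⟨ζ, h1, h2⟩ := h'; exact ⟨ζ, h1, h2⟩)
    have hagree : ∀ η : μ.ord.ToType, η < ζ → c η = d η := by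
      intro η hη
      by_contra hne
      exact hmin η ⟨(idx_mono μ η ζ hη).trans hζξ, hne⟩ hη
    apply hsplit c d ζ hagree hζne
    have hρ : min (F c (idx μ ζ + 1)) (F d (idx μ ζ + 1)) ≤ F c ξ := by
      refine (min_le_left _ _).trans ?_
      have h1 : idx μ ζ + 1 ≤ ξ := by
        rw [Ordinal.add_one_eq_succ]; exact Order.succ_le_of_lt hζξ
      rcases h1.lt_or_eq with h2 | h2
      · exact (hFmono c _ ξ h2 hξ).le
      · rw [h2]
    ext b
    constructor
    · rintro ⟨hb, hlt⟩
      have : b ∈ {b | b ∈ ι d ∧ idx κ b < F c ξ} := heq ▸ ⟨hb, hlt.trans_le hρ⟩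
      exact ⟨this.1, hlt⟩
    · rintro ⟨hb, hlt⟩
      have : b ∈ {b | b ∈ ι c ∧ idx κ b < F c ξ} := heq ▸ (⟨hb, hlt.trans_le hρ⟩ :
        b ∈ {b | b ∈ ι d ∧ idx κ b < F c ξ})
      exact ⟨this.1, hlt⟩
  -- injectivity
  have hinj : Function.Injective ι := by
    intro c d h
    by_contra hne
    obtain ⟨ζ, hζne, hmin⟩ :=
      (wellFounded_lt (α := μ.ord.ToType)).has_min {ζ | c ζ ≠ d ζ}
        (Function.ne_iff.mp hne)
    have hagree : ∀ η : μ.ord.ToType, η < ζ → c η = d η := by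
      intro η hη
      by_contra hcd
      exact hmin η hcd hη
    exact hsplit c d ζ hagree hζne (by rw [h])
  -- every `funTop`-open set contains a basic neighborhood around each of its points
  have hbasis : ∀ U : Set (μ.ord.ToType → κ.ord.ToType), @IsOpen _ (funTop μ κ) U →
      ∀ c ∈ U, ∃ ξ < μ.ord, N c ξ ⊆ U := by
    intro U hU
    have hU' : TopologicalSpace.GenerateOpen gfun U := hU
    induction hU' with
    | basic S hS =>
      obtain ⟨ξ, s, hξ, rfl⟩ := hS
      intro c hc
      exact ⟨ξ, hξ, fun f hf η hη => (hf η hη).trans (hc η hη)⟩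
    | univ => exact fun c _ => ⟨0, hμ0, fun f _ => trivial⟩
    | inter U V hUo hVo ihU ihV =>
      intro c hc
      obtain ⟨ξ₁, hξ₁, hs₁⟩ := ihU hUo c hc.1
      obtain ⟨ξ₂, hξ₂, hs₂⟩ := ihV hVo c hc.2
      refine ⟨max ξ₁ ξ₂, max_lt hξ₁ hξ₂, fun f hf => ⟨?_, ?_⟩⟩
      · exact hs₁ fun η hη => hf η (hη.trans_le (le_max_left _ _))
      · exact hs₂ fun η hη => hf η (hη.trans_le (le_max_right _ _))
    | sUnion S hS ih =>
      intro c hc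
      obtain ⟨U, hUS, hcU⟩ := hc
      obtain ⟨ξ, hξ, hs⟩ := ih U hUS (hS U hUS) c hcU
      exact ⟨ξ, hξ, hs.trans (Set.subset_sUnion_of_mem hUS)⟩
  refine ⟨hinj, ?_, ?_⟩
  · -- continuity
    rw [hpowTop]
    refine (continuous_generateFrom_iff (t := funTop μ κ) (b := gpow) (f := ι)).mpr ?_
    rintro S ⟨η, a, hη, ha, rfl⟩
    rw [hfunTop]
    apply aux_isOpen_generateFrom_of_forall
    intro c hc
    obtain ⟨ξ, hξ, hFξ⟩ := hFcof c η hη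
    refine ⟨N c ξ, hNmem c ξ hξ, hNself c ξ, ?_⟩
    intro d hd
    have heq := hsame c d ξ hξ (fun η' hη' => (hd η' hη').symm)
    have hc' : {b | b ∈ ι c ∧ idx κ b < η} = a := hc
    show {b | b ∈ ι d ∧ idx κ b < η} = a
    rw [← hc']
    ext b
    constructor
    · rintro ⟨hb, hlt⟩
      have : b ∈ {b | b ∈ ι c ∧ idx κ b < F c ξ} := heq ▸ (⟨hb, hlt.trans hFξ⟩ :
        b ∈ {b | b ∈ ι d ∧ idx κ b < F c ξ})
      exact ⟨this.1, hlt⟩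
    · rintro ⟨hb, hlt⟩
      have : b ∈ {b | b ∈ ι d ∧ idx κ b < F c ξ} := heq ▸ ⟨hb, hlt.trans hFξ⟩
      exact ⟨this.1, hlt⟩
  · -- open map onto the range
    intro O hO
    refine ⟨⋃₀ {W | W ∈ gpow ∧ W ∩ Set.range ι ⊆ ι '' O}, ?_, ?_⟩
    · rw [hpowTop]
      exact @isOpen_sUnion _ (TopologicalSpace.generateFrom gpow) _
        fun W hW => TopologicalSpace.isOpen_generateFrom_of_mem hW.1
    · apply Set.Subset.antisymm
      · rintro y ⟨c, hcO, rfl⟩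
        obtain ⟨ξ, hξ, hNsub⟩ := hbasis O hO c hcO
        refine ⟨⟨{y | {b | b ∈ y ∧ idx κ b < F c ξ} = {b | b ∈ ι c ∧ idx κ b < F c ξ}},
          ⟨⟨F c ξ, {b | b ∈ ι c ∧ idx κ b < F c ξ}, hFlt c ξ hξ,
            fun b hb => hb.2, rfl⟩, ?_⟩, rfl⟩, ⟨c, rfl⟩⟩
        rintro z ⟨hzW, d, rfl⟩
        have hd : d ∈ N c ξ := splitlem c d ξ hξ (Eq.symm hzW)
        exact ⟨d, hNsub hd, rfl⟩
      · rintro y ⟨⟨W, ⟨_, hWsub⟩, hyW⟩, hyr⟩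
        exact hWsub ⟨hyW, hyr⟩
end

section
/- Let κ be an infinite regular cardinal and let A be an almost disjoint family in 𝒫(κ) of cardinality κ. Then A is not maximal: there exists an unbounded subset x of κ such that x ∩ y is bounded in κ for every y ∈ A. -/
universe u

open Cardinal

/-- Any subset of `κ.ord.ToType` of cardinality `< κ` is bounded, for `κ` regular. -/
lemma statement7_aux_bounded (κ : Cardinal.{u}) (hreg : κ.IsRegular)
    (s : Set κ.ord.ToType) (hs : Cardinal.mk s < κ) :
    Set.Bounded (· < ·) s := by
  have : ¬ IsCofinal s := fun h => absurd (Order.cof_le h)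
    (not_le.2 (by rwa [Ordinal.cof_toType, hreg.cof_ord]))
  exact not_isCofinal_iff.1 this

/-- Let `κ` be an infinite regular cardinal (represented by the canonical
type `κ.ord.ToType` of order type `κ`) and let `A` be an almost disjoint family in `𝒫(κ)`
of cardinality `κ`: a family of `κ` many unbounded subsets of `κ` whose pairwise
intersections are bounded. Then `A` is not maximal: there exists an unbounded subset `x`
of `κ` such that `x ∩ y` is bounded in `κ` for every `y ∈ A`. -/
theorem statement7 (κ : Cardinal.{u}) (hreg : κ.IsRegular)
    (A : Set (Set κ.ord.ToType))
    (hunbounded : ∀ x ∈ A, Set.Unbounded (· < ·) x)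
    (halmostdisj : ∀ x ∈ A, ∀ y ∈ A, x ≠ y → Set.Bounded (· < ·) (x ∩ y))
    (hcard : Cardinal.mk A = κ) :
    ∃ x : Set κ.ord.ToType, Set.Unbounded (· < ·) x ∧
      ∀ y ∈ A, Set.Bounded (· < ·) (x ∩ y) := by
  classical
  -- enumeration of `A` by `α := κ.ord.ToType`
  have hmkα : Cardinal.mk κ.ord.ToType = κ := by
    rw [Cardinal.mk_toType, Cardinal.card_ord]
  obtain ⟨f⟩ : Nonempty (κ.ord.ToType ≃ A) := by
    rw [← Cardinal.eq, hmkα, hcard]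
  set B : κ.ord.ToType → Set κ.ord.ToType := fun i => (f i : Set κ.ord.ToType) with hB
  have hBmem : ∀ i, B i ∈ A := fun i => (f i).2
  have hBne : ∀ i j, i ≠ j → B i ≠ B j := by
    intro i j hij h
    exact hij (f.injective (Subtype.ext h))
  -- for each `i ≠ j` pick a bound for `B i ∩ B j`
  have hbd : ∀ i j : κ.ord.ToType, i ≠ j → ∃ b, ∀ c ∈ B i ∩ B j, c < b := by
    intro i j hij
    exact halmostdisj _ (hBmem i) _ (hBmem j) (hBne i j hij)
  -- pick the diagonal element `x i ∈ B i`
  have hx : ∀ i : κ.ord.ToType, ∃ x ∈ B i, i < x ∧ ∀ j < i, x ∉ B j := by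
    intro i
    -- the set of bounds for `B i ∩ B j`, `j < i`, together with `i`
    set g : Set.Iio i → κ.ord.ToType :=
      fun j => Classical.choose (hbd i (↑j) (ne_of_gt j.2)) with hg
    set D : Set κ.ord.ToType := insert i (Set.range g) with hD
    have hDcard : Cardinal.mk D < κ := by
      have h1 : Cardinal.mk (Set.range g) ≤ Cardinal.mk (Set.Iio i) :=
        Cardinal.mk_range_le
      have h2 : Cardinal.mk (Set.Iio i) < κ := Cardinal.mk_Iio_ord_toType i
      calc Cardinal.mk D ≤ Cardinal.mk (Set.range g) + 1 := Cardinal.mk_insert_le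
        _ ≤ Cardinal.mk (Set.Iio i) + 1 := by gcongr
        _ < κ := by
            apply Cardinal.add_lt_of_lt hreg.aleph0_le h2
            exact lt_of_lt_of_le Cardinal.one_lt_aleph0 hreg.aleph0_le
    obtain ⟨m, hm⟩ := statement7_aux_bounded κ hreg D hDcard
    obtain ⟨x, hxB, hxm⟩ := hunbounded _ (hBmem i) m
    have hmx : m ≤ x := le_of_not_gt hxm
    refine ⟨x, hxB, ?_, ?_⟩
    · exact lt_of_lt_of_le (hm i (by simp [hD])) hmx
    · intro j hj hxj
      have hbj : x < Classical.choose (hbd i j (ne_of_gt hj)) :=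
        Classical.choose_spec (hbd i j (ne_of_gt hj)) x ⟨hxB, hxj⟩
      have hlt : Classical.choose (hbd i j (ne_of_gt hj)) < m := by
        apply hm
        exact Set.mem_insert_iff.mpr (Or.inr ⟨⟨j, hj⟩, rfl⟩)
      exact absurd (hbj.trans (hlt.trans_le hmx)) (lt_irrefl x)
  choose x hxB hxgt hxnot using hx
  refine ⟨Set.range x, ?_, ?_⟩
  · intro a
    exact ⟨x a, Set.mem_range_self a, not_lt_of_gt (hxgt a)⟩
  · intro y hy
    set j := f.symm ⟨y, hy⟩ with hj
    have hyB : y = B j := by simp [hB, hj]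
    have hsub : Set.range x ∩ y ⊆ x '' Set.Iic j := by
      rintro c ⟨⟨i, rfl⟩, hcy⟩
      refine ⟨i, ?_, rfl⟩
      by_contra hij
      simp only [Set.mem_Iic, not_le] at hij
      exact hxnot i j hij (hyB ▸ hcy)
    have hcard2 : Cardinal.mk (Set.range x ∩ y : Set κ.ord.ToType) < κ := by
      refine lt_of_le_of_lt (Cardinal.mk_le_mk_of_subset hsub) ?_
      refine lt_of_le_of_lt Cardinal.mk_image_le ?_
      have hIic : (Set.Iic j : Set κ.ord.ToType) = insert j (Set.Iio j) := by
        ext a; simp [le_iff_lt_or_eq, or_comm]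
      rw [hIic]
      refine lt_of_le_of_lt Cardinal.mk_insert_le ?_
      apply Cardinal.add_lt_of_lt hreg.aleph0_le (Cardinal.mk_Iio_ord_toType j)
      exact lt_of_lt_of_le Cardinal.one_lt_aleph0 hreg.aleph0_le
    exact statement7_aux_bounded κ hreg _ hcard2
end

section
/- If κ is a strongly inaccessible cardinal (an uncountable regular strong limit cardinal), then there exists an almost disjoint family in 𝒫(κ) of cardinality 2^κ. -/
universe u

open Cardinal

/-- If `κ` is a strongly inaccessible cardinal (an uncountable regular
strong limit cardinal), represented by the canonical type `κ.ord.toType` of order type `κ`,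
then there exists an almost disjoint family in `𝒫(κ)` of cardinality `2^κ`: a family of
`2^κ` many unbounded subsets of `κ` whose pairwise intersections are bounded. -/
theorem statement9 (κ : Cardinal.{u}) (hinacc : κ.IsInaccessible) :
    ∃ A : Set (Set κ.ord.ToType),
      (∀ x ∈ A, Set.Unbounded (· < ·) x) ∧
      (∀ x ∈ A, ∀ y ∈ A, x ≠ y → Set.Bounded (· < ·) (x ∩ y)) ∧
      Cardinal.mk A = 2 ^ κ := by
  obtain ⟨h0, hreg, hsl⟩ : ℵ₀ < κ ∧ κ.IsRegular ∧ κ.IsStrongLimit :=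
    ⟨hinacc.aleph0_lt, hinacc.isRegular, hinacc.isStrongLimit⟩
  set T := κ.ord.ToType with hT
  haveI : NoMaxOrder T := Cardinal.noMaxOrder hreg.aleph0_le
  have mkT : #T = κ := by rw [hT, Cardinal.mk_toType, card_ord]
  haveI : IsWellOrder T (· < ·) := isWellOrder_lt
  have harrow : ∀ (γ : Type u), #(γ → Bool) = 2 ^ #γ := fun γ => by
    rw [← Cardinal.mk_set]
    exact mk_congr ((Equiv.refl γ).arrowCongr Equiv.propEquivBool.symm)
  have hbdd : ∀ S : Set T, #S < κ → Set.Bounded (· < ·) S := by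
    intro S hS
    obtain ⟨x, hx⟩ := (not_isCofinal_iff (s := S)).1 (fun hc => by
      have := Ordinal.lt_cof_type hc
      rw [Ordinal.cof_toType, hreg.cof_ord] at this
      exact absurd hS (not_lt.2 this))
    exact ⟨x, hx⟩
  have hIio : ∀ b : T, #(Set.Iio b) < κ := fun b => Cardinal.mk_Iio_ord_toType b
  have hIic : ∀ b : T, #(Set.Iic b) < κ := by
    intro b
    obtain ⟨b', hb'⟩ := exists_gt b
    exact lt_of_le_of_lt
      (mk_le_mk_of_subset fun x hx => lt_of_le_of_lt hx hb') (hIio b')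
  have hunb : ∀ S : Set T, #S = κ → Set.Unbounded (· < ·) S := by
    intro S hS
    by_contra h
    rw [Set.not_unbounded_iff] at h
    obtain ⟨b, hb⟩ := h
    have hsub : S ⊆ Set.Iio b := fun y hy => hb y hy
    have h2 := mk_le_mk_of_subset hsub
    rw [hS] at h2
    exact absurd h2 (not_le.2 (hIio b))
  -- the tree of bounded Boolean sequences
  let P : Type u := Σ α : T, (Set.Iio α → Bool)
  have mkP : #P = κ := by
    apply le_antisymm
    · calc #P = Cardinal.sum (fun α : T => #(Set.Iio α → Bool)) := mk_sigma _
        _ ≤ Cardinal.sum (fun _ : T => κ) := Cardinal.sum_le_sum _ _ (fun α => by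
            rw [harrow]
            exact (hsl.two_power_lt (hIio α)).le)
        _ = #T * κ := Cardinal.sum_const' _ _
        _ = κ := by rw [mkT]; exact Cardinal.mul_eq_self hreg.aleph0_le
    · rw [← mkT]
      exact mk_le_of_injective (f := fun α : T => (⟨α, fun _ => false⟩ : P))
        (fun a b h => congrArg Sigma.fst h)
  obtain ⟨e⟩ : Nonempty (P ≃ T) := Cardinal.eq.1 (mkP.trans mkT.symm)
  let g : (T → Bool) → T → P := fun f α => ⟨α, fun β => f β.1⟩
  have hginj : ∀ f, Function.Injective (g f) := fun f a b h => congrArg Sigma.fst h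
  have hkey : ∀ f f' : T → Bool, ∀ α α' : T, g f α = g f' α' →
      α = α' ∧ ∀ β < α, f β = f' β := by
    intro f f' α α' h
    obtain ⟨h1, h2⟩ := Sigma.mk.inj_iff.1 h
    subst h1
    exact ⟨rfl, fun β hβ => congrFun (eq_of_heq h2) ⟨β, hβ⟩⟩
  let x : (T → Bool) → Set T := fun f => e '' Set.range (g f)
  have hxinj : Function.Injective x := by
    intro f f' h
    have hr : Set.range (g f) = Set.range (g f') := by
      have := congrArg (Set.preimage e) h
      rwa [Set.preimage_image_eq _ e.injective, Set.preimage_image_eq _ e.injective] at this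
    funext β
    obtain ⟨β', hβ'⟩ := exists_gt β
    have hm : g f β' ∈ Set.range (g f') := hr ▸ Set.mem_range_self β'
    obtain ⟨α', hα'⟩ := hm
    obtain ⟨h1, h2⟩ := hkey f' f α' β' hα'
    exact (h2 β (h1 ▸ hβ')).symm
  have hxcard : ∀ f, #(x f) = κ := fun f => by
    rw [mk_image_eq e.injective, mk_range_eq _ (hginj f), mkT]
  have hxint : ∀ f f', f ≠ f' → #(x f ∩ x f' : Set T) < κ := by
    intro f f' hne
    obtain ⟨β₀, hβ₀⟩ : ∃ β₀, f β₀ ≠ f' β₀ := Function.ne_iff.1 hne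
    have hsub : Set.range (g f) ∩ Set.range (g f') ⊆ g f '' Set.Iic β₀ := by
      rintro p ⟨⟨α, rfl⟩, ⟨α', hα'⟩⟩
      refine ⟨α, ?_, rfl⟩
      obtain ⟨h1, h2⟩ := hkey f' f α' α hα'
      subst h1
      by_contra hgt
      exact hβ₀ ((h2 β₀ (not_le.1 hgt)).symm)
    calc #(x f ∩ x f' : Set T)
        = #(e '' (Set.range (g f) ∩ Set.range (g f'))) := by
          rw [Set.image_inter e.injective]
      _ ≤ #(e '' (g f '' Set.Iic β₀)) :=
          mk_le_mk_of_subset (Set.image_mono hsub)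
      _ ≤ #(Set.Iic β₀) := by
          rw [mk_image_eq e.injective, mk_image_eq (hginj f)]
      _ < κ := hIic β₀
  refine ⟨Set.range x, ?_, ?_, ?_⟩
  · rintro _ ⟨f, rfl⟩
    exact hunb _ (hxcard f)
  · rintro _ ⟨f, rfl⟩ _ ⟨f', rfl⟩ hne
    exact hbdd _ (hxint f f' (fun h => hne (by rw [h])))
  · rw [mk_range_eq _ hxinj, harrow, mkT]
end
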